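/- arXiv:1810.04977 — 4 statements merged into one kernel-verified Lean document; each statement's English description precedes it below -/
import Mathlib

section
/- Let M and N be indecomposable representations of Q, and let 0 → M →(ι) B →(π) N → 0 be a non-split short exact sequence of representations of Q (non-split means there is no morphism σ : N → B with π ∘ σ = id_N). If the linear map End(B) → Hom(M,N) given by φ ↦ π ∘ φ ∘ ι is the zero map, then B is indecomposable. -/
namespace QuivRep

variable (k : Type) [Field k] {V A : Type} (s t : A → V)

/-- `RSp k s t X Y` is R(N,M) = ⊕_{a∈Q_1} Hom_k(N_{s(a)}, M_{t(a)}) where the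
representation `N` has vertex spaces `X` and `M` has vertex spaces `Y`. -/
abbrev RSp (X Y : V → Type) [∀ q, AddCommGroup (X q)] [∀ q, Module k (X q)]
    [∀ q, AddCommGroup (Y q)] [∀ q, Module k (Y q)] : Type :=
  ∀ a : A, X (s a) →ₗ[k] Y (t a)

variable {X Y : V → Type}
  [∀ q, AddCommGroup (X q)] [∀ q, Module k (X q)]
  [∀ q, AddCommGroup (Y q)] [∀ q, Module k (Y q)]

/-- The linear map `d_{N,M}` whose cokernel is Ext(N,M). Here `Nm` are the arrow
maps of `N` (on spaces `X`) and `Mm` those of `M` (on spaces `Y`). -/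
def dMap (Nm : RSp k s t X X) (Mm : RSp k s t Y Y) :
    (∀ q, X q →ₗ[k] Y q) →ₗ[k] RSp k s t X Y where
  toFun f := fun a => (f (t a)).comp (Nm a) - (Mm a).comp (f (s a))
  map_add' f g := by
    funext a; ext x
    simp only [Pi.add_apply, LinearMap.add_comp, LinearMap.comp_add, LinearMap.sub_apply,
      LinearMap.add_apply, LinearMap.comp_apply]
    abel
  map_smul' c f := by
    funext a; ext x
    simp [smul_sub]

/-- `f : M → N` is a morphism of representations (`M` on spaces `X`, `N` on spaces `Y`). -/
def IsRHom (Mm : RSp k s t X X) (Nm : RSp k s t Y Y) (f : ∀ q, X q →ₗ[k] Y q) : Prop :=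
  ∀ a, (f (t a)).comp (Mm a) = (Nm a).comp (f (s a))

/-- Isomorphism of representations. -/
def RIso (Mm : RSp k s t X X) (Nm : RSp k s t Y Y) : Prop :=
  ∃ f : ∀ q, X q →ₗ[k] Y q, IsRHom k s t Mm Nm f ∧ ∀ q, Function.Bijective (f q)

/-- A family of submodules is a subrepresentation. -/
def IsSubRep (Mm : RSp k s t X X) (U : ∀ q, Submodule k (X q)) : Prop :=
  ∀ a, ∀ x ∈ U (s a), Mm a x ∈ U (t a)

/-- Indecomposability: nonzero, and no nontrivial internal direct sum decomposition. -/
def Indec (Mm : RSp k s t X X) : Prop :=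
  (∃ q, ∃ x : X q, x ≠ 0) ∧
  ∀ U W : ∀ q, Submodule k (X q), IsSubRep k s t Mm U → IsSubRep k s t Mm W →
    (∀ q, U q ⊓ W q = ⊥) → (∀ q, U q ⊔ W q = ⊤) →
    (∀ q, U q = ⊥) ∨ (∀ q, W q = ⊥)

/-- The middle term `B(f,λ,μ)` of the extension determined by `f ∈ R(N,M)`:
vertex spaces `Y q × X q`, arrow maps `[[Mm, f],[0, Nm]]`. -/
def BExt (Mm : RSp k s t Y Y) (Nm : RSp k s t X X) (f : RSp k s t X Y) :
    RSp k s t (fun q => Y q × X q) (fun q => Y q × X q) :=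
  fun a => LinearMap.prod
    ((Mm a).comp (LinearMap.fst k (Y (s a)) (X (s a))) +
      (f a).comp (LinearMap.snd k (Y (s a)) (X (s a))))
    ((Nm a).comp (LinearMap.snd k (Y (s a)) (X (s a))))

/-- `U` is strong: every deformation `M(λ)`, `λ ∈ U`, is indecomposable. -/
def Strong (Mm : RSp k s t X X) (U : Set (RSp k s t X X)) : Prop :=
  ∀ lam ∈ U, Indec k s t (Mm + lam)

/-- `U` is separating: `M(λ) ≅ M(μ)` implies `λ = μ` for `λ, μ ∈ U`. -/
def Separating (Mm : RSp k s t X X) (U : Set (RSp k s t X X)) : Prop :=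
  ∀ lam ∈ U, ∀ mu ∈ U, RIso k s t (Mm + lam) (Mm + mu) → lam = mu

/-- `End(M) = k·id`. -/
def EndTrivial (Mm : RSp k s t X X) : Prop :=
  ∀ f : ∀ q, X q →ₗ[k] X q, IsRHom k s t Mm Mm f → ∃ c : k, ∀ q, f q = c • LinearMap.id

/-- `Hom(M,N) = 0`. -/
def HomZero (Mm : RSp k s t X X) (Nm : RSp k s t Y Y) : Prop :=
  ∀ f : ∀ q, X q →ₗ[k] Y q, IsRHom k s t Mm Nm f → f = 0

end QuivRep


open QuivRep


section Aux

open LinearMap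

variable {k : Type} [Field k] {V A : Type} (s t : A → V)
    {XM XB XN : V → Type}
    [∀ q, AddCommGroup (XM q)] [∀ q, Module k (XM q)]
    [∀ q, AddCommGroup (XB q)] [∀ q, Module k (XB q)]
    [∀ q, AddCommGroup (XN q)] [∀ q, Module k (XN q)]

lemma aux_split (Bm : RSp k s t XB XB) (Nm : RSp k s t XN XN)
    (ι : ∀ q, XM q →ₗ[k] XB q) (π : ∀ q, XB q →ₗ[k] XN q)
    (hπ : IsRHom k s t Bm Nm π)
    (hsurj : ∀ q, Function.Surjective (π q))
    (hex : ∀ q, LinearMap.range (ι q) = LinearMap.ker (π q))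
    (e : ∀ q, XB q →ₗ[k] XB q) (he : IsRHom k s t Bm Bm e)
    (heι : ∀ q x, e q (ι q x) = ι q x)
    (hπe : ∀ q x, π q (e q x) = 0) :
    ∃ σ : ∀ q, XN q →ₗ[k] XB q, IsRHom k s t Nm Bm σ ∧
      ∀ q, (π q).comp (σ q) = LinearMap.id := by
  have hsec : ∀ q, ∃ g : XN q →ₗ[k] XB q, (π q).comp g = LinearMap.id := fun q =>
    (π q).exists_rightInverse_of_surjective (LinearMap.range_eq_top.2 (hsurj q))
  choose g hg using hsec
  have key : ∀ q x, g q (π q x) - e q (g q (π q x)) = x - e q x := by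
    intro q x
    have h1 : π q (g q (π q x) - x) = 0 := by
      have := congrArg (fun f => f (π q x)) (hg q)
      simp only [LinearMap.comp_apply, LinearMap.id_apply] at this
      simp [this]
    have h2 : g q (π q x) - x ∈ LinearMap.range (ι q) := by
      rw [hex q]; exact h1
    obtain ⟨m, hm⟩ := h2
    have hgx : g q (π q x) = x + ι q m := by rw [hm]; abel
    simp only [hgx, map_add, heι]
    abel
  refine ⟨fun q => (LinearMap.id - e q).comp (g q), ?_, ?_⟩
  · intro a
    ext y
    obtain ⟨x, rfl⟩ := hsurj (s a) y
    have hπa := congrArg (fun f => f x) (hπ a)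
    simp only [LinearMap.comp_apply] at hπa
    simp only [LinearMap.comp_apply, LinearMap.sub_apply, LinearMap.id_apply]
    rw [← hπa, key, key, map_sub]
    have hea := congrArg (fun f => f x) (he a)
    simp only [LinearMap.comp_apply] at hea
    rw [hea]
  · intro q
    ext y
    simp only [LinearMap.comp_apply, LinearMap.sub_apply, LinearMap.id_apply, map_sub,
      hπe, sub_zero]
    have := congrArg (fun f => f y) (hg q)
    simpa using this

end Aux

/-- Let `M`, `N` be indecomposable representations of `Q` and let
`0 → M →(ι) B →(π) N → 0` be a non-split short exact sequence of representations
(exactness taken vertexwise).  If the induced map `End(B) → Hom(M,N)`,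
`φ ↦ π ∘ φ ∘ ι`, is the zero map, then `B` is indecomposable. -/
theorem statement1 {k : Type} [Field k] {V A : Type} [Fintype V] [Fintype A]
    (s t : A → V)
    {XM XB XN : V → Type}
    [∀ q, AddCommGroup (XM q)] [∀ q, Module k (XM q)] [∀ q, FiniteDimensional k (XM q)]
    [∀ q, AddCommGroup (XB q)] [∀ q, Module k (XB q)] [∀ q, FiniteDimensional k (XB q)]
    [∀ q, AddCommGroup (XN q)] [∀ q, Module k (XN q)] [∀ q, FiniteDimensional k (XN q)]
    (Mm : RSp k s t XM XM) (Bm : RSp k s t XB XB) (Nm : RSp k s t XN XN)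
    (hM : Indec k s t Mm) (hN : Indec k s t Nm)
    (ι : ∀ q, XM q →ₗ[k] XB q) (π : ∀ q, XB q →ₗ[k] XN q)
    (hι : IsRHom k s t Mm Bm ι) (hπ : IsRHom k s t Bm Nm π)
    (hinj : ∀ q, Function.Injective (ι q))
    (hsurj : ∀ q, Function.Surjective (π q))
    (hex : ∀ q, LinearMap.range (ι q) = LinearMap.ker (π q))
    (hnonsplit : ¬ ∃ σ : ∀ q, XN q →ₗ[k] XB q,
      IsRHom k s t Nm Bm σ ∧ ∀ q, (π q).comp (σ q) = LinearMap.id)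
    (hzero : ∀ φ : ∀ q, XB q →ₗ[k] XB q, IsRHom k s t Bm Bm φ →
      ∀ q, (π q).comp ((φ q).comp (ι q)) = 0) :
    Indec k s t Bm := by
  classical
  constructor
  · -- B is nonzero
    obtain ⟨q, x, hx⟩ := hM.1
    refine ⟨q, ι q x, fun h => hx ?_⟩
    have : ι q x = ι q 0 := by simpa using h
    exact hinj q this
  · intro U W hU hW hinf hsup
    -- the projection onto U along W
    have hcompl : ∀ q, IsCompl (U q) (W q) := fun q =>
      ⟨disjoint_iff.mpr (hinf q), codisjoint_iff.mpr (hsup q)⟩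
    set e : ∀ q, XB q →ₗ[k] XB q := fun q =>
      (U q).subtype.comp ((U q).projectionOnto (W q) (hcompl q)) with he_def
    have heMem : ∀ q x, e q x ∈ U q := fun q x =>
      ((U q).projectionOnto (W q) (hcompl q) x).2
    have heU : ∀ q, ∀ u ∈ U q, e q u = u := by
      intro q u hu
      have := Submodule.linearProjOfIsCompl_apply_left (hcompl q) ⟨u, hu⟩
      simp [he_def, Submodule.projectionOnto_apply_of_mem_left (hcompl q) hu]
    have heW : ∀ q, ∀ w ∈ W q, e q w = 0 := by
      intro q w hw
      have := Submodule.projectionOnto_apply_of_mem_right (hcompl q) hw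
      simp [he_def, this]
    have hdecomp : ∀ q x, ∃ u ∈ U q, ∃ w ∈ W q, x = u + w := by
      intro q x
      have hx : x ∈ U q ⊔ W q := by rw [hsup q]; trivial
      obtain ⟨u, hu, w, hw, hx⟩ := Submodule.mem_sup.1 hx
      exact ⟨u, hu, w, hw, hx.symm⟩
    have heval : ∀ q x, ∀ u ∈ U q, ∀ w ∈ W q, x = u + w → e q x = u := by
      intro q x u hu w hw hx
      rw [hx, map_add, heU q u hu, heW q w hw, add_zero]
    have hsubW : ∀ q x, x - e q x ∈ W q := by
      intro q x
      obtain ⟨u, hu, w, hw, hx⟩ := hdecomp q x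
      rw [heval q x u hu w hw hx, hx, add_sub_cancel_left]
      exact hw
    -- e is a morphism of representations
    have heR : IsRHom k s t Bm Bm e := by
      intro a
      ext x
      simp only [LinearMap.comp_apply]
      obtain ⟨u, hu, w, hw, hx⟩ := hdecomp (s a) x
      rw [heval (s a) x u hu w hw hx, hx, map_add]
      exact heval (t a) _ (Bm a u) (hU a u hu) (Bm a w) (hW a w hw) rfl
    -- π ∘ e ∘ ι = 0
    have hπeι : ∀ q x, π q (e q (ι q x)) = 0 := by
      intro q x
      have := congrArg (fun f => f x) (hzero e heR q)
      simpa using this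
    have hπι : ∀ q x, π q (ι q x) = 0 := by
      intro q x
      have : ι q x ∈ LinearMap.ker (π q) := by
        rw [← hex q]; exact ⟨x, rfl⟩
      exact this
    have hpre : ∀ q x, ∃ m : XM q, ι q m = e q (ι q x) := by
      intro q x
      have : e q (ι q x) ∈ LinearMap.range (ι q) := by
        rw [hex q]; exact hπeι q x
      exact this
    have hpre2 : ∀ q x, ∃ m : XM q, ι q m = ι q x - e q (ι q x) := by
      intro q x
      have : ι q x - e q (ι q x) ∈ LinearMap.range (ι q) := by
        rw [hex q]
        have : π q (ι q x - e q (ι q x)) = 0 := by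
          rw [map_sub, hπι, hπeι, sub_zero]
        exact this
      exact this
    -- pull back the decomposition to M
    have hMcase : (∀ q x, e q (ι q x) = 0) ∨ (∀ q x, e q (ι q x) = ι q x) := by
      have hUM : IsSubRep k s t Mm (fun q => (U q).comap (ι q)) := by
        intro a x hx
        have hh := congrArg (fun f => f x) (hι a)
        simp only [LinearMap.comp_apply] at hh
        simp only [Submodule.mem_comap] at hx ⊢
        rw [hh]
        exact hU a _ hx
      have hWM : IsSubRep k s t Mm (fun q => (W q).comap (ι q)) := by
        intro a x hx
        have hh := congrArg (fun f => f x) (hι a)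
        simp only [LinearMap.comp_apply] at hh
        simp only [Submodule.mem_comap] at hx ⊢
        rw [hh]
        exact hW a _ hx
      rcases hM.2 _ _ hUM hWM
        (fun q => by
          rw [eq_bot_iff]
          intro m hm
          simp only [Submodule.mem_inf, Submodule.mem_comap] at hm
          have hm2 : ι q m ∈ U q ⊓ W q := Submodule.mem_inf.2 hm
          rw [hinf q] at hm2
          have : ι q m = ι q 0 := by simpa using hm2
          simpa using hinj q this)
        (fun q => by
          rw [eq_top_iff]
          intro x _
          obtain ⟨m, hm⟩ := hpre q x
          obtain ⟨m', hm'⟩ := hpre2 q x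
          have hxm : x = m + m' := by
            apply hinj q
            rw [map_add, hm, hm']
            abel
          rw [hxm]
          refine Submodule.add_mem_sup ?_ ?_
          · simpa [Submodule.mem_comap, hm] using heMem q (ι q x)
          · simpa [Submodule.mem_comap, hm'] using hsubW q (ι q x)) with h1 | h2
      · left
        intro q x
        obtain ⟨m, hm⟩ := hpre q x
        have hmU : m ∈ (U q).comap (ι q) := by
          simpa [Submodule.mem_comap, hm] using heMem q (ι q x)
        rw [h1 q] at hmU
        simp only [Submodule.mem_bot] at hmU
        rw [← hm, hmU, map_zero]
      · right
        intro q x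
        obtain ⟨m', hm'⟩ := hpre2 q x
        have hmW : m' ∈ (W q).comap (ι q) := by
          simpa [Submodule.mem_comap, hm'] using hsubW q (ι q x)
        rw [h2 q] at hmW
        simp only [Submodule.mem_bot] at hmW
        rw [hmW, map_zero] at hm'
        exact (sub_eq_zero.mp hm'.symm).symm
    -- push forward the decomposition to N
    have hNcase : (∀ q x, π q (e q x) = 0) ∨ (∀ q x, π q (e q x) = π q x) := by
      have hUN : IsSubRep k s t Nm (fun q => (U q).map (π q)) := by
        intro a y hy
        obtain ⟨u, hu, rfl⟩ := hy
        have hh := congrArg (fun f => f u) (hπ a)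
        simp only [LinearMap.comp_apply] at hh
        rw [← hh]
        exact ⟨Bm a u, hU a u hu, rfl⟩
      have hWN : IsSubRep k s t Nm (fun q => (W q).map (π q)) := by
        intro a y hy
        obtain ⟨w, hw, rfl⟩ := hy
        have hh := congrArg (fun f => f w) (hπ a)
        simp only [LinearMap.comp_apply] at hh
        rw [← hh]
        exact ⟨Bm a w, hW a w hw, rfl⟩
      rcases hN.2 _ _ hUN hWN
        (fun q => by
          rw [eq_bot_iff]
          rintro y ⟨⟨u, hu, huy⟩, ⟨w, hw, hwy⟩⟩
          have hker : u - w ∈ LinearMap.ker (π q) := by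
            simp only [LinearMap.mem_ker, map_sub, huy, hwy, sub_self]
          rw [← hex q] at hker
          obtain ⟨m, hm⟩ := hker
          have heu : e q (u - w) = u := by
            rw [map_sub, heU q u hu, heW q w hw, sub_zero]
          have : π q u = 0 := by
            rw [← heu, ← hm, hπeι]
          simp only [Submodule.mem_bot, ← huy, this])
        (fun q => by
          rw [eq_top_iff]
          intro y _
          obtain ⟨x, rfl⟩ := hsurj q y
          obtain ⟨u, hu, w, hw, hx⟩ := hdecomp q x
          rw [hx, map_add]
          exact Submodule.add_mem_sup ⟨u, hu, rfl⟩ ⟨w, hw, rfl⟩) with h1 | h2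
      · left
        intro q x
        have : π q (e q x) ∈ (U q).map (π q) := ⟨e q x, heMem q x, rfl⟩
        rw [h1 q] at this
        simpa using this
      · right
        intro q x
        have : π q (x - e q x) ∈ (W q).map (π q) := ⟨x - e q x, hsubW q x, rfl⟩
        rw [h2 q] at this
        simp only [Submodule.mem_bot, map_sub, sub_eq_zero] at this
        exact this.symm
    -- four cases
    rcases hMcase with heι0 | heιid <;> rcases hNcase with hπe0 | hπeid
    · -- e = 0 on all of B, so U = ⊥
      left
      intro q
      rw [eq_bot_iff]
      intro u hu
      have h1 : u ∈ LinearMap.ker (π q) := by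
        have : π q u = π q (e q u) := by rw [heU q u hu]
        rw [LinearMap.mem_ker, this, hπe0]
      rw [← hex q] at h1
      obtain ⟨m, hm⟩ := h1
      have : u = e q u := (heU q u hu).symm
      rw [Submodule.mem_bot, this, ← hm, heι0]
    · -- e ι = 0, π e = π : 1 - e gives a splitting, contradiction
      exfalso
      apply hnonsplit
      refine aux_split s t Bm Nm ι π hπ hsurj hex (fun q => LinearMap.id - e q) ?_ ?_ ?_
      · intro a
        rw [LinearMap.sub_comp, LinearMap.comp_sub, LinearMap.id_comp, LinearMap.comp_id,
          heR a]
      · intro q x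
        simp [heι0 q x]
      · intro q x
        simp [hπeid q x]
    · -- e ι = ι, π e = 0 : e gives a splitting, contradiction
      exfalso
      apply hnonsplit
      exact aux_split s t Bm Nm ι π hπ hsurj hex e heR heιid hπe0
    · -- e = id on all of B, so W = ⊥
      right
      intro q
      rw [eq_bot_iff]
      intro w hw
      have hπw : π q w = 0 := by
        rw [← hπeid q w, heW q w hw, map_zero]
      have h1 : w ∈ LinearMap.ker (π q) := hπw
      rw [← hex q] at h1
      obtain ⟨m, hm⟩ := h1
      have h2 : e q w = w := by rw [← hm, heιid]
      rw [Submodule.mem_bot, ← h2, heW q w hw]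
end

section
/- Fix representations M, N of Q, a nonzero e ∈ R(N,M), and subsets U_{N,M} ⊆ R(N,M), U_M ⊆ R(M,M), U_N ⊆ R(N,N). Assume that U_M and U_N are both strong, and that W ⊆ U_{N,M} × U_M × U_N is a subset such that: (i) π_{N(μ),M(λ)}(e+τ) ≠ 0 in Ext(N(μ),M(λ)) for all (τ,λ,μ) ∈ W; and (ii) for every (τ,λ,μ) ∈ W and every endomorphism φ of B(e+τ,λ,μ), the composition (canonical projection onto N(μ)) ∘ φ ∘ (canonical inclusion of M(λ)) is the zero morphism M(λ) → N(μ). Then B(e+τ,λ,μ) is indecomposable for every (τ,λ,μ) ∈ W; equivalently, the corresponding subset (e,0,0)+W of R(B,B), for B = B(e,0,0), is strong. -/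
open QuivRep

variable {k : Type} [Field k] {V A : Type} [Fintype V] [Fintype A] (s t : A → V)
variable {X Y : V → Type}
  [∀ q, AddCommGroup (X q)] [∀ q, Module k (X q)] [∀ q, FiniteDimensional k (X q)]
  [∀ q, AddCommGroup (Y q)] [∀ q, Module k (Y q)] [∀ q, FiniteDimensional k (Y q)]

/-- Theorem `strong`.  With `M` a representation on spaces `Y`, `N` on
spaces `X`, `e ∈ R(N,M)` nonzero, `U_M`, `U_N` strong, and `W ⊆ U_{N,M} × U_M × U_N`
such that (i) `π_{N(μ),M(λ)}(e+τ) ≠ 0` and (ii) the composition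
`proj_{N(μ)} ∘ φ ∘ incl_{M(λ)}` vanishes for every endomorphism `φ` of `B(e+τ,λ,μ)`,
every `B(e+τ,λ,μ)`, `(τ,λ,μ) ∈ W`, is indecomposable; i.e. `(e,0,0)+W` is strong. -/
theorem statement2
    (Mm : RSp k s t Y Y) (Nm : RSp k s t X X)
    (e : RSp k s t X Y) (he : e ≠ 0)
    (UNM : Set (RSp k s t X Y)) (UM : Set (RSp k s t Y Y)) (UN : Set (RSp k s t X X))
    (hUM : Strong k s t Mm UM) (hUN : Strong k s t Nm UN)
    (W : Set ((RSp k s t X Y) × (RSp k s t Y Y) × (RSp k s t X X)))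
    (hW : W ⊆ UNM ×ˢ (UM ×ˢ UN))
    (hnonzero : ∀ p ∈ W,
      e + p.1 ∉ LinearMap.range (dMap k s t (Nm + p.2.2) (Mm + p.2.1)))
    (hTheta : ∀ p ∈ W, ∀ φ : ∀ q, (Y q × X q) →ₗ[k] (Y q × X q),
      IsRHom k s t (BExt k s t (Mm + p.2.1) (Nm + p.2.2) (e + p.1))
        (BExt k s t (Mm + p.2.1) (Nm + p.2.2) (e + p.1)) φ →
      ∀ q, (LinearMap.snd k (Y q) (X q)).comp
        ((φ q).comp (LinearMap.inl k (Y q) (X q))) = 0) :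
    ∀ p ∈ W, Indec k s t (BExt k s t (Mm + p.2.1) (Nm + p.2.2) (e + p.1)) := by
  intro p hp
  have hnz := hnonzero p hp
  set f : RSp k s t X Y := e + p.1 with hf
  set Lm : RSp k s t Y Y := Mm + p.2.1 with hLm
  set Nn : RSp k s t X X := Nm + p.2.2 with hNn
  obtain ⟨htaumem, hlamem, hmumem⟩ := hW hp
  have hB : ∀ (a : A) (y : Y (s a)) (x : X (s a)),
      BExt k s t Lm Nn f a (y, x) = (Lm a y + f a x, Nn a x) := by
    intro a y x
    simp [BExt]
  constructor
  · -- nonzero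
    obtain ⟨a, ha⟩ : ∃ a, e a ≠ 0 := by
      by_contra h
      push_neg at h
      exact he (funext h)
    obtain ⟨x, hx⟩ : ∃ x, e a x ≠ 0 := by
      by_contra h
      push_neg at h
      exact ha (LinearMap.ext h)
    refine ⟨t a, (e a x, 0), ?_⟩
    simp [Prod.ext_iff, hx]
  · intro SU SW hSU hSW hinf hsup
    have hcompl : ∀ q, IsCompl (SU q) (SW q) := fun q =>
      ⟨disjoint_iff.mpr (hinf q), codisjoint_iff.mpr (hsup q)⟩
    set φ : ∀ q, (Y q × X q) →ₗ[k] (Y q × X q) :=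
      fun q => (SU q).subtype.comp ((SU q).projectionOnto (SW q) (hcompl q)) with hφdef
    have hmemU : ∀ q x, φ q x ∈ SU q := fun q x => by
      simp [hφdef]
    have hidU : ∀ q, ∀ u ∈ SU q, φ q u = u := by
      intro q u hu
      have h1 := Submodule.projectionOnto_apply_left (hcompl q) ⟨u, hu⟩
      simpa [hφdef] using congrArg (Subtype.val) h1
    have hzeroW : ∀ q, ∀ w ∈ SW q, φ q w = 0 := by
      intro q w hw
      have h1 := Submodule.projectionOnto_apply_of_mem_right (hcompl q) hw
      simpa [hφdef] using congrArg (Subtype.val) h1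
    have hdecomp : ∀ q (x : Y q × X q), φ q x ∈ SU q ∧ x - φ q x ∈ SW q := by
      intro q x
      refine ⟨hmemU q x, ?_⟩
      have hx : x ∈ SU q ⊔ SW q := by rw [hsup q]; trivial
      obtain ⟨u, hu, w, hw, huw⟩ := Submodule.mem_sup.mp hx
      have : φ q x = u := by
        rw [← huw, map_add, hidU q u hu, hzeroW q w hw, add_zero]
      rw [this, ← huw]
      simpa using hw
    have hhom : IsRHom k s t (BExt k s t Lm Nn f) (BExt k s t Lm Nn f) φ := by
      intro a
      apply LinearMap.ext
      intro x
      have hx1 := (hdecomp (s a) x).1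
      have hx2 := (hdecomp (s a) x).2
      have e1 : BExt k s t Lm Nn f a (φ (s a) x) ∈ SU (t a) := hSU a _ hx1
      have e2 : BExt k s t Lm Nn f a (x - φ (s a) x) ∈ SW (t a) := hSW a _ hx2
      have : x = φ (s a) x + (x - φ (s a) x) := by abel
      calc φ (t a) (BExt k s t Lm Nn f a x)
          = φ (t a) (BExt k s t Lm Nn f a (φ (s a) x))
            + φ (t a) (BExt k s t Lm Nn f a (x - φ (s a) x)) := by
            conv_lhs => rw [this]
            rw [map_add, map_add]
        _ = BExt k s t Lm Nn f a (φ (s a) x) := by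
            rw [hidU _ _ e1, hzeroW _ _ e2, add_zero]
    have hγ := hTheta p hp φ hhom
    set α : ∀ q, Y q →ₗ[k] Y q := fun q =>
      (LinearMap.fst k (Y q) (X q)).comp ((φ q).comp (LinearMap.inl k (Y q) (X q))) with hαdef
    set β : ∀ q, X q →ₗ[k] Y q := fun q =>
      (LinearMap.fst k (Y q) (X q)).comp ((φ q).comp (LinearMap.inr k (Y q) (X q))) with hβdef
    set δ : ∀ q, X q →ₗ[k] X q := fun q =>
      (LinearMap.snd k (Y q) (X q)).comp ((φ q).comp (LinearMap.inr k (Y q) (X q))) with hδdef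
    have hφval : ∀ q (y : Y q) (x : X q), φ q (y, x) = (α q y + β q x, δ q x) := by
      intro q y x
      have hsplit : ((y, x) : Y q × X q) = (y, 0) + (0, x) := by simp
      have hγ' : (φ q (y, 0)).2 = 0 := LinearMap.congr_fun (hγ q) y
      rw [hsplit, map_add]
      have h1 : φ q (y, (0 : X q)) = (α q y, 0) := by
        have : (φ q (y, 0)).1 = α q y := rfl
        exact Prod.ext this hγ'
      have h2 : φ q ((0 : Y q), x) = (β q x, δ q x) := rfl
      rw [h1, h2]
      simp
    -- pointwise morphism equations
    have hom' : ∀ (a : A) (y : Y (s a)) (x : X (s a)),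
        φ (t a) (Lm a y + f a x, Nn a x) = (Lm a (α (s a) y + β (s a) x) + f a (δ (s a) x),
          Nn a (δ (s a) x)) := by
      intro a y x
      have h := LinearMap.congr_fun (hhom a) (y, x)
      simp only [LinearMap.comp_apply] at h
      rw [hB, hφval (s a) y x, hB] at h
      exact h
    have E1 : ∀ (a : A) (y : Y (s a)), α (t a) (Lm a y) = Lm a (α (s a) y) := by
      intro a y
      have h := hom' a y 0
      simp only [map_zero, add_zero] at h
      rw [hφval] at h
      have := congrArg Prod.fst h
      simpa using this
    have E2 : ∀ (a : A) (x : X (s a)),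
        α (t a) (f a x) + β (t a) (Nn a x) = Lm a (β (s a) x) + f a (δ (s a) x) := by
      intro a x
      have h := hom' a 0 x
      simp only [map_zero, zero_add] at h
      rw [hφval] at h
      have := congrArg Prod.fst h
      simpa using this
    have E2b : ∀ (a : A) (x : X (s a)), δ (t a) (Nn a x) = Nn a (δ (s a) x) := by
      intro a x
      have h := hom' a 0 x
      simp only [map_zero, zero_add] at h
      rw [hφval] at h
      have := congrArg Prod.snd h
      simpa using this
    have hidem : ∀ q (x : Y q × X q), φ q (φ q x) = φ q x := fun q x =>
      hidU q _ (hmemU q x)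
    have Eα : ∀ q (y : Y q), α q (α q y) = α q y := by
      intro q y
      have h := hidem q (y, 0)
      rw [hφval, hφval] at h
      have := congrArg Prod.fst h
      simpa using this
    have Eδ : ∀ q (x : X q), δ q (δ q x) = δ q x := by
      intro q x
      have h := hidem q (0, x)
      rw [hφval, hφval] at h
      simpa using congrArg Prod.snd h
    have Eβ : ∀ q (x : X q), α q (β q x) + β q (δ q x) = β q x := by
      intro q x
      have h := hidem q (0, x)
      rw [hφval, hφval] at h
      have := congrArg Prod.fst h
      simpa using this
    -- α is 0 or id
    have hαcase : (∀ q (y : Y q), α q y = 0) ∨ (∀ q (y : Y q), α q y = y) := by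
      have hM := (hUM p.2.1 hlamem).2 (fun q => LinearMap.range (α q))
        (fun q => LinearMap.ker (α q))
        (by
          intro a y hy
          obtain ⟨z, hz⟩ := hy
          exact ⟨Lm a z, by rw [E1, hz]⟩)
        (by
          intro a y hy
          simp only [LinearMap.mem_ker] at hy ⊢
          rw [E1, hy, map_zero])
        (by
          intro q
          rw [eq_bot_iff]
          rintro y ⟨⟨z, hz⟩, hy⟩
          change α q y = 0 at hy
          have : y = α q y := by rw [← hz, Eα]
          rw [Submodule.mem_bot, this]
          exact hy)
        (by
          intro q
          rw [eq_top_iff]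
          intro y _
          have : y = α q y + (y - α q y) := by abel
          rw [this]
          refine Submodule.add_mem_sup ⟨y, rfl⟩ ?_
          simp only [LinearMap.mem_ker, map_sub, Eα, sub_self])
      rcases hM with h | h
      · left
        intro q y
        have := h q
        rw [LinearMap.range_eq_bot] at this
        exact LinearMap.congr_fun this y
      · right
        intro q y
        have hinj : Function.Injective (α q) := by
          rw [← LinearMap.ker_eq_bot]
          exact h q
        exact hinj (Eα q y)
    have hδcase : (∀ q (x : X q), δ q x = 0) ∨ (∀ q (x : X q), δ q x = x) := by
      have hN := (hUN p.2.2 hmumem).2 (fun q => LinearMap.range (δ q))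
        (fun q => LinearMap.ker (δ q))
        (by
          intro a x hx
          obtain ⟨z, hz⟩ := hx
          exact ⟨Nn a z, by rw [E2b, hz]⟩)
        (by
          intro a x hx
          simp only [LinearMap.mem_ker] at hx ⊢
          rw [E2b, hx, map_zero])
        (by
          intro q
          rw [eq_bot_iff]
          rintro x ⟨⟨z, hz⟩, hx⟩
          change δ q x = 0 at hx
          have : x = δ q x := by rw [← hz, Eδ]
          rw [Submodule.mem_bot, this]
          exact hx)
        (by
          intro q
          rw [eq_top_iff]
          intro x _
          have : x = δ q x + (x - δ q x) := by abel
          rw [this]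
          refine Submodule.add_mem_sup ⟨x, rfl⟩ ?_
          simp only [LinearMap.mem_ker, map_sub, Eδ, sub_self])
      rcases hN with h | h
      · left
        intro q x
        have := h q
        rw [LinearMap.range_eq_bot] at this
        exact LinearMap.congr_fun this x
      · right
        intro q x
        have hinj : Function.Injective (δ q) := by
          rw [← LinearMap.ker_eq_bot]
          exact h q
        exact hinj (Eδ q x)
    rcases hαcase with hα | hα <;> rcases hδcase with hδ | hδ
    · -- α = 0, δ = 0 : φ = 0, SU = ⊥
      have hβ0 : ∀ q (x : X q), β q x = 0 := by
        intro q x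
        have h := Eβ q x
        rw [hα, hδ, map_zero, add_zero] at h
        exact h.symm
      have hφ0 : ∀ q (x : Y q × X q), φ q x = 0 := by
        intro q x
        rw [show x = (x.1, x.2) from rfl, hφval, hα, hβ0, hδ]
        simp
      left
      intro q
      rw [eq_bot_iff]
      intro u hu
      have : u = φ q u := (hidU q u hu).symm
      rw [this, hφ0]
      trivial
    · -- α = 0, δ = id : f = d β, contradiction
      exfalso
      apply hnz
      refine ⟨β, ?_⟩
      funext a
      apply LinearMap.ext
      intro x
      have h := E2 a x
      rw [hα, hδ, zero_add] at h
      simp only [dMap, LinearMap.coe_mk, AddHom.coe_mk, LinearMap.sub_apply,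
        LinearMap.comp_apply]
      rw [h]
      abel
    · -- α = id, δ = 0 : f = d (-β), contradiction
      exfalso
      apply hnz
      refine ⟨fun q => -(β q), ?_⟩
      funext a
      apply LinearMap.ext
      intro x
      have h := E2 a x
      rw [hα, hδ, map_zero, add_zero] at h
      simp only [dMap, LinearMap.coe_mk, AddHom.coe_mk, LinearMap.sub_apply,
        LinearMap.comp_apply, LinearMap.neg_apply, map_neg]
      rw [← h]
      abel
    · -- α = id, δ = id : φ = id, SW = ⊥
      have hβ0 : ∀ q (x : X q), β q x = 0 := by
        intro q x
        have h := Eβ q x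
        rw [hα, hδ] at h
        exact add_eq_right.mp h
      have hφid : ∀ q (x : Y q × X q), φ q x = x := by
        intro q x
        rw [show x = (x.1, x.2) from rfl, hφval, hα, hβ0, hδ]
        simp
      right
      intro q
      rw [eq_bot_iff]
      intro w hw
      have h1 : φ q w = 0 := hzeroW q w hw
      rw [hφid] at h1
      simp [h1]
end

section
/- Let M, N be representations of Q with End(M) = k·id, End(N) = k·id and Hom(M,N) = 0, and suppose {e_1, …, e_n} ⊆ R(N,M) represents a basis of Ext(N,M). Fix 1 ≤ d ≤ n. For A = (v_{a_1}, …, v_{a_n}) with each v_{a_i} ∈ k^d (equivalently, a representation of the generalized Kronecker quiver K(n) of dimension vector (1,d), with v_{a_i} the matrix of the arrow a_i), let Γ(A) := Σ_{i=1}^n e_i ⊗ v_{a_i} ∈ R(N, M ⊗ k^d) ≅ R(N,M) ⊗ k^d, and let F(A) := B(Γ(A)) be the middle term of the corresponding extension of N by M ⊗ k^d ≅ M^d. Then: (1) F(A) ≅ F(A') if and only if A and A' are isomorphic as representations of K(n), which for these dimension vectors holds if and only if there exists g ∈ GL_d(k) with A = gA' (i.e. v_{a_i} = g·v'_{a_i}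 for all i); and (2) F(A) is indecomposable if and only if the d×n matrix with columns v_{a_1}, …, v_{a_n} has rank d (equivalently, A is indecomposable as a representation of K(n)). -/
open QuivRep

variable {k : Type} [Field k] {V A : Type} [Fintype V] [Fintype A] (s t : A → V)
variable {X Y : V → Type}
  [∀ q, AddCommGroup (X q)] [∀ q, Module k (X q)] [∀ q, FiniteDimensional k (X q)]
  [∀ q, AddCommGroup (Y q)] [∀ q, Module k (Y q)] [∀ q, FiniteDimensional k (Y q)]

/-- The representation `M ⊗ k^d ≅ M^d`, realized on the vertex spaces `Fin d → Y q`. -/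
def piRep (d : ℕ) (Mm : RSp k s t Y Y) :
    RSp k s t (fun q => Fin d → Y q) (fun q => Fin d → Y q) :=
  fun a => LinearMap.pi (fun j => (Mm a).comp (LinearMap.proj j))

/-- `Γ(A) = Σ_i e_i ⊗ v_{a_i} ∈ R(N, M ⊗ k^d)` for a dimension-`(1,d)` representation
`v` of the generalized Kronecker quiver `K(n)`. -/
def Gamma (n d : ℕ) (e : Fin n → RSp k s t X Y) (v : Fin n → Fin d → k) :
    RSp k s t X (fun q => Fin d → Y q) :=
  fun a => LinearMap.pi (fun j => ∑ i, v i j • e i a)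

set_option linter.unusedSectionVars false

/-- Pointwise description of `BExt`. -/
lemma BExt_apply (Mm : RSp k s t Y Y) (Nm : RSp k s t X X) (f : RSp k s t X Y)
    (a : A) (z : Y (s a) × X (s a)) :
    BExt k s t Mm Nm f a z = (Mm a z.1 + f a z.2, Nm a z.2) := rfl

lemma piRep_apply (d : ℕ) (Mm : RSp k s t Y Y) (a : A) (y : Fin d → Y (s a)) :
    piRep s t d Mm a y = fun j => Mm a (y j) := rfl

lemma Gamma_apply (n d : ℕ) (e : Fin n → RSp k s t X Y) (v : Fin n → Fin d → k)
    (a : A) (x : X (s a)) (j : Fin d) :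
    Gamma s t n d e v a x j = ∑ i, v i j • e i a x := by
  simp [Gamma, LinearMap.pi_apply]

lemma piRep_single (d : ℕ) (Mm : RSp k s t Y Y) (a : A) (l : Fin d) (y : Y (s a)) :
    piRep s t d Mm a (Pi.single l y) = Pi.single l (Mm a y) := by
  funext j
  rcases eq_or_ne j l with rfl | hj
  · simp [piRep_apply]
  · simp [piRep_apply, Pi.single_eq_of_ne hj]

lemma homZero_pi (d : ℕ) (Mm : RSp k s t Y Y) (Nm : RSp k s t X X)
    (hMN : HomZero k s t Mm Nm) : HomZero k s t (piRep s t d Mm) Nm := by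
  intro f hf
  have hl : ∀ (l : Fin d) (q : V),
      (f q).comp (LinearMap.single k (fun _ : Fin d => Y q) l) = 0 := by
    intro l
    have : ∀ q, ((f q).comp (LinearMap.single k (fun _ : Fin d => Y q) l)) =
        (fun q => (f q).comp (LinearMap.single k (fun _ : Fin d => Y q) l)) q := fun q => rfl
    intro q
    have h0 := hMN (fun q => (f q).comp (LinearMap.single k (fun _ : Fin d => Y q) l)) ?_
    · exact congrFun h0 q
    · intro a
      ext y
      have := DFunLike.congr_fun (hf a) (Pi.single l y)
      simp only [LinearMap.comp_apply] at this ⊢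
      simp only [LinearMap.single_apply]
      rw [← piRep_single s t d Mm a l y]
      exact this
  funext q
  refine LinearMap.ext fun y => ?_
  have : y = ∑ l, Pi.single l (y l) := (Finset.univ_sum_single y).symm
  rw [this, map_sum]
  simp only [LinearMap.zero_apply]
  refine Finset.sum_eq_zero fun l _ => ?_
  have := DFunLike.congr_fun (hl l q) (y l)
  simpa using this

lemma endTrivial_pi (d : ℕ) (Mm : RSp k s t Y Y) (hM : EndTrivial k s t Mm)
    (α : ∀ q, (Fin d → Y q) →ₗ[k] (Fin d → Y q))
    (hα : IsRHom k s t (piRep s t d Mm) (piRep s t d Mm) α) :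
    ∃ g : Matrix (Fin d) (Fin d) k, ∀ q (y : Fin d → Y q) (j : Fin d),
      α q y j = ∑ l, g j l • y l := by
  have key : ∀ j l : Fin d, ∃ c : k, ∀ q,
      ((LinearMap.proj j).comp ((α q).comp
        (LinearMap.single k (fun _ : Fin d => Y q) l))) = c • LinearMap.id := by
    intro j l
    apply hM
    intro a
    ext y
    have := DFunLike.congr_fun (hα a) (Pi.single l y)
    simp only [LinearMap.comp_apply, LinearMap.proj_apply, LinearMap.single_apply]
    rw [← piRep_single s t d Mm a l y]
    rw [show α (t a) (piRep s t d Mm a (Pi.single l y))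
        = piRep s t d Mm a (α (s a) (Pi.single l y)) from by
      simpa only [LinearMap.comp_apply] using this]
    rfl
  choose g hg using key
  refine ⟨g, fun q y j => ?_⟩
  have hy : y = ∑ l, Pi.single l (y l) := (Finset.univ_sum_single y).symm
  calc α q y j = (∑ l, α q (Pi.single l (y l))) j := by rw [← map_sum, ← hy]
    _ = ∑ l, α q (Pi.single l (y l)) j := by simp
    _ = ∑ l, g j l • y l := by
        refine Finset.sum_congr rfl fun l _ => ?_
        have := DFunLike.congr_fun (hg j l q) (y l)
        simpa using this
/-- Structure of morphisms between middle terms of extensions: upper triangular with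
matrix top-left block, scalar bottom-right block, and top-right block a coboundary relation. -/
lemma hom_structure (d : ℕ) (Mm : RSp k s t Y Y) (Nm : RSp k s t X X)
    (hEndM : EndTrivial k s t Mm) (hEndN : EndTrivial k s t Nm)
    (hHomMN : HomZero k s t Mm Nm)
    (G G' : RSp k s t X (fun q => Fin d → Y q))
    (φ : ∀ q, ((Fin d → Y q) × X q) →ₗ[k] ((Fin d → Y q) × X q))
    (hφ : IsRHom k s t (BExt k s t (piRep s t d Mm) Nm G)
      (BExt k s t (piRep s t d Mm) Nm G') φ) :
    ∃ (g : Matrix (Fin d) (Fin d) k) (c : k),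
      (∀ q (y : Fin d → Y q), φ q (y, 0) = ((fun j => ∑ l, g j l • y l), 0)) ∧
      (∀ q (x : X q), (φ q (0, x)).2 = c • x) ∧
      (∀ j : Fin d,
        (fun a => c • ((LinearMap.proj j).comp (G' a))
            - ∑ l, g j l • ((LinearMap.proj l).comp (G a)))
          ∈ LinearMap.range (dMap k s t Nm Mm)) := by
  have hev : ∀ (a : A) (y : Fin d → Y (s a)) (x : X (s a)),
      φ (t a) (piRep s t d Mm a y + G a x, Nm a x) =
        (piRep s t d Mm a (φ (s a) (y, x)).1 + G' a (φ (s a) (y, x)).2,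
          Nm a (φ (s a) (y, x)).2) := by
    intro a y x
    have := DFunLike.congr_fun (hφ a) (y, x)
    simpa [BExt_apply, LinearMap.comp_apply] using this
  -- γ = 0
  have hγ0 : ∀ q (y : Fin d → Y q), (φ q (y, 0)).2 = 0 := by
    have := homZero_pi s t d Mm Nm hHomMN
      (fun q => (LinearMap.snd k (Fin d → Y q) (X q)).comp
        ((φ q).comp (LinearMap.inl k (Fin d → Y q) (X q)))) ?_
    · intro q y
      have h := congrFun this q
      have := DFunLike.congr_fun h y
      simpa using this
    · intro a
      refine LinearMap.ext fun y => ?_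
      have := congrArg Prod.snd (hev a y 0)
      simpa [piRep_apply] using this
  -- α is an endomorphism of M^d
  have hαrh : IsRHom k s t (piRep s t d Mm) (piRep s t d Mm)
      (fun q => (LinearMap.fst k (Fin d → Y q) (X q)).comp
        ((φ q).comp (LinearMap.inl k (Fin d → Y q) (X q)))) := by
    intro a
    refine LinearMap.ext fun y => ?_
    have h := congrArg Prod.fst (hev a y 0)
    simp only [map_zero, add_zero] at h
    simp only [LinearMap.comp_apply, LinearMap.inl_apply, LinearMap.fst_apply]
    rw [h, hγ0 (s a) y]
    simp [piRep_apply]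
  obtain ⟨g, hg⟩ := endTrivial_pi s t d Mm hEndM _ hαrh
  have hα : ∀ q (y : Fin d → Y q), φ q (y, 0) = ((fun j => ∑ l, g j l • y l), 0) := by
    intro q y
    have h1 := hg q y
    refine Prod.ext ?_ (hγ0 q y)
    funext j
    simpa using (h1 j).symm ▸ (rfl : (φ q (y,0)).1 j = (φ q (y,0)).1 j)
  -- δ = c • id
  have hδrh : IsRHom k s t Nm Nm
      (fun q => (LinearMap.snd k (Fin d → Y q) (X q)).comp
        ((φ q).comp (LinearMap.inr k (Fin d → Y q) (X q)))) := by
    intro a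
    ext x
    have h := congrArg Prod.snd (hev a 0 x)
    simp only [map_zero, zero_add] at h
    have hsplit : φ (t a) (G a x, Nm a x) =
        φ (t a) (G a x, 0) + φ (t a) (0, Nm a x) := by
      rw [← map_add]; congr 1; simp
    rw [hsplit] at h
    have := congrArg Prod.snd hsplit
    simp only [LinearMap.comp_apply, LinearMap.inr_apply, LinearMap.snd_apply]
    have h2 : (φ (t a) (G a x, 0)).2 = 0 := hγ0 (t a) (G a x)
    simp only [Prod.snd_add, h2, zero_add] at h
    exact h
  obtain ⟨c, hc⟩ := hEndN _ hδrh
  have hδ : ∀ q (x : X q), (φ q (0, x)).2 = c • x := by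
    intro q x
    have := DFunLike.congr_fun (hc q) x
    simpa using this
  refine ⟨g, c, hα, hδ, ?_⟩
  intro j
  refine ⟨fun q => (LinearMap.proj j).comp
    ((LinearMap.fst k (Fin d → Y q) (X q)).comp
      ((φ q).comp (LinearMap.inr k (Fin d → Y q) (X q)))), ?_⟩
  funext a
  ext x
  -- compute both sides at x
  have h := congrArg Prod.fst (hev a 0 x)
  simp only [map_zero, zero_add] at h
  have hsplit : φ (t a) (G a x, Nm a x) =
      φ (t a) (G a x, 0) + φ (t a) (0, Nm a x) := by
    rw [← map_add]; congr 1; simp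
  rw [hsplit, Prod.fst_add, hα (t a) (G a x), hδ (s a) x] at h
  -- h : (fun j => ∑ l, g j l • G a x l) + (φ (t a) (0, Nm a x)).1
  --      = piRep a (φ (s a) (0,x)).1 + G' a (c • x)
  have hj := congrFun h j
  simp only [Pi.add_apply, piRep_apply] at hj
  simp only [dMap, LinearMap.coe_mk, AddHom.coe_mk, LinearMap.sub_apply, LinearMap.comp_apply,
    LinearMap.proj_apply, LinearMap.fst_apply, LinearMap.inr_apply, LinearMap.smul_apply,
    Pi.sub_apply, Pi.smul_apply, LinearMap.sum_apply, Finset.sum_apply]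
  have hG' : G' a (c • x) = c • G' a x := map_smul _ _ _
  rw [hG'] at hj
  have : (φ (t a) (0, Nm a x)).1 j - Mm a ((φ (s a) (0, x)).1 j) =
      c • (G' a x j) - ∑ l, g j l • G a x l := by
    have := hj
    simp only [Pi.smul_apply] at this
    linear_combination (norm := module) this
  simpa using this
/-- Linear independence of the classes of the `e i` turns coboundary relations into
scalar equations. -/
lemma coeff_zero (Mm : RSp k s t Y Y) (Nm : RSp k s t X X)
    (n : ℕ) (e : Fin n → RSp k s t X Y)
    (hindep : LinearIndependent k (fun i =>
      Submodule.Quotient.mk (p := LinearMap.range (dMap k s t Nm Mm)) (e i)))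
    (w : Fin n → k) (hw : (∑ i, w i • e i) ∈ LinearMap.range (dMap k s t Nm Mm)) :
    ∀ i, w i = 0 := by
  have h0 : (∑ i, w i • Submodule.Quotient.mk (p := LinearMap.range (dMap k s t Nm Mm)) (e i))
      = 0 := by
    have : Submodule.Quotient.mk (p := LinearMap.range (dMap k s t Nm Mm)) (∑ i, w i • e i)
        = 0 := (Submodule.Quotient.mk_eq_zero _).mpr hw
    rw [← this]
    simp only [← Submodule.mkQ_apply, map_sum, map_smul]
  exact Fintype.linearIndependent_iff.mp hindep w h0

/-- The coboundary relation from `hom_structure`, in the `Gamma` case, gives the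
matrix/scalar intertwining equations. -/
lemma coeff_eq (Mm : RSp k s t Y Y) (Nm : RSp k s t X X)
    (n : ℕ) (e : Fin n → RSp k s t X Y)
    (hindep : LinearIndependent k (fun i =>
      Submodule.Quotient.mk (p := LinearMap.range (dMap k s t Nm Mm)) (e i)))
    (d : ℕ) (v v' : Fin n → Fin d → k) (g : Matrix (Fin d) (Fin d) k) (c : k)
    (h : ∀ j : Fin d,
      (fun a => c • ((LinearMap.proj j).comp (Gamma s t n d e v' a))
          - ∑ l, g j l • ((LinearMap.proj l).comp (Gamma s t n d e v a)))
        ∈ LinearMap.range (dMap k s t Nm Mm)) :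
    ∀ i j, ∑ l, g j l * v i l = c * v' i j := by
  intro i j
  have key : (fun a => c • ((LinearMap.proj j).comp (Gamma s t n d e v' a))
      - ∑ l, g j l • ((LinearMap.proj l).comp (Gamma s t n d e v a)))
      = ∑ i, (c * v' i j - ∑ l, g j l * v i l) • e i := by
    funext a
    ext x
    simp only [LinearMap.sub_apply, LinearMap.smul_apply, LinearMap.comp_apply,
      LinearMap.proj_apply, LinearMap.sum_apply, Finset.sum_apply, Pi.sub_apply, Pi.smul_apply]
    simp only [Gamma_apply]
    have h2 : ∑ l, g j l • ∑ i', v i' l • e i' a x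
        = ∑ i', (∑ l, g j l * v i' l) • e i' a x := by
      simp only [Finset.smul_sum, smul_smul]
      rw [Finset.sum_comm]
      simp only [Finset.sum_smul]
    rw [h2, Finset.smul_sum]
    simp only [smul_smul, sub_smul, Finset.sum_sub_distrib]
  have := coeff_zero s t Mm Nm n e hindep (fun i => c * v' i j - ∑ l, g j l * v i l)
    (by rw [← key]; exact h j)
  have hi := this i
  exact (sub_eq_zero.mp hi).symm
/-- The action of a `d × d` matrix on `Fin d → W`. -/
def Phi {k : Type} [Field k] {d : ℕ} (g : Matrix (Fin d) (Fin d) k)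
    (W : Type) [AddCommGroup W] [Module k W] : (Fin d → W) →ₗ[k] (Fin d → W) :=
  LinearMap.pi fun j => ∑ l, g j l • LinearMap.proj l

lemma Phi_apply {d : ℕ} (g : Matrix (Fin d) (Fin d) k)
    (W : Type) [AddCommGroup W] [Module k W] (y : Fin d → W) (j : Fin d) :
    Phi g W y j = ∑ l, g j l • y l := by
  simp [Phi]

lemma Phi_comp {d : ℕ} (g h : Matrix (Fin d) (Fin d) k)
    (W : Type) [AddCommGroup W] [Module k W] (y : Fin d → W) :
    Phi g W (Phi h W y) = Phi (g * h) W y := by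
  funext j
  simp only [Phi_apply]
  have : ∀ l, g j l • ∑ m, h l m • y m = ∑ m, (g j l * h l m) • y m := by
    intro l; rw [Finset.smul_sum]; simp [smul_smul]
  simp only [this]
  rw [Finset.sum_comm]
  refine Finset.sum_congr rfl fun m _ => ?_
  rw [← Finset.sum_smul]
  rfl

lemma Phi_one {d : ℕ} (W : Type) [AddCommGroup W] [Module k W] (y : Fin d → W) :
    Phi (1 : Matrix (Fin d) (Fin d) k) W y = y := by
  funext j
  rw [Phi_apply]
  simp [Matrix.one_apply, ite_smul]

/-- Construction of morphisms `F(A) → F(A')` of the form `diag(g ⊗ 1, 1)`. -/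
lemma isRHom_construct (d n : ℕ) (e : Fin n → RSp k s t X Y)
    (Mm : RSp k s t Y Y) (Nm : RSp k s t X X)
    (v v' : Fin n → Fin d → k) (g : Matrix (Fin d) (Fin d) k)
    (hgv : ∀ i j, ∑ l, g j l * v i l = v' i j) :
    IsRHom k s t (BExt k s t (piRep s t d Mm) Nm (Gamma s t n d e v))
      (BExt k s t (piRep s t d Mm) Nm (Gamma s t n d e v'))
      (fun q => (Phi g (Y q)).prodMap (LinearMap.id : X q →ₗ[k] X q)) := by
  intro a
  refine LinearMap.ext fun z => ?_
  simp only [LinearMap.comp_apply, BExt_apply, LinearMap.prodMap_apply, LinearMap.id_apply]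
  refine Prod.ext ?_ rfl
  simp only
  funext j
  simp only [Phi_apply, map_add, Pi.add_apply, piRep_apply, Gamma_apply]
  have h1 : ∑ l, g j l • (Mm a (z.1 l) + ∑ i, v i l • e i a z.2)
      = Mm a (∑ l, g j l • z.1 l) + ∑ l, g j l • ∑ i, v i l • e i a z.2 := by
    rw [map_sum]
    rw [← Finset.sum_add_distrib]
    refine Finset.sum_congr rfl fun l _ => ?_
    rw [smul_add, map_smul]
  rw [h1]
  congr 1
  have h2 : ∑ l, g j l • ∑ i, v i l • e i a z.2
      = ∑ i, (∑ l, g j l * v i l) • e i a z.2 := by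
    simp only [Finset.smul_sum, smul_smul]
    rw [Finset.sum_comm]
    simp only [Finset.sum_smul]
  rw [h2]
  refine Finset.sum_congr rfl fun i _ => ?_
  rw [hgv i j]

/-- rank of the matrix of column vectors `v i` equals `d` iff the `v i` span `k^d`. -/
lemma rank_iff_span (d n : ℕ) (v : Fin n → Fin d → k) :
    Matrix.rank (Matrix.of (fun (j : Fin d) (i : Fin n) => v i j)) = d ↔
      Submodule.span k (Set.range v) = ⊤ := by
  have htr : (Matrix.of (fun (j : Fin d) (i : Fin n) => v i j)).transpose = Matrix.of v := rfl
  have hr : Matrix.rank (Matrix.of (fun (j : Fin d) (i : Fin n) => v i j))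
      = Module.finrank k (Submodule.span k (Set.range v)) := by
    rw [Matrix.rank, Matrix.range_mulVecLin]
    rfl
  rw [hr]
  constructor
  · intro hh
    refine Submodule.eq_top_of_finrank_eq ?_
    rw [hh, Module.finrank_fintype_fun_eq_card]
    simp
  · intro hh
    rw [hh, finrank_top, Module.finrank_fintype_fun_eq_card]
    simp
/-- Proposition `KnPn`.  `M`, `N` Schurian with `Hom(M,N)=0` and
`{e_1,…,e_n}` representing a basis of `Ext(N,M)`; for `1 ≤ d ≤ n` and a representation
`A = (v_{a_i})_i` of `K(n)` of dimension `(1,d)`, `F(A) := B(Γ(A))` satisfies: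
`F(A) ≅ F(A')` iff `A ≅ A'` as `K(n)`-representations (iff `A = gA'` for some
`g ∈ GL_d(k)`), and `F(A)` is indecomposable iff the `d×n` matrix with columns
`v_{a_i}` has rank `d` (iff `A` is indecomposable). -/
theorem statement5
    (Mm : RSp k s t Y Y) (Nm : RSp k s t X X)
    (hEndM : EndTrivial k s t Mm) (hEndN : EndTrivial k s t Nm)
    (hHomMN : HomZero k s t Mm Nm)
    (n : ℕ) (e : Fin n → RSp k s t X Y)
    (hindep : LinearIndependent k (fun i =>
      Submodule.Quotient.mk (p := LinearMap.range (dMap k s t Nm Mm)) (e i)))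
    (hspan : Submodule.span k
      (Set.range (fun i => Submodule.Quotient.mk
        (p := LinearMap.range (dMap k s t Nm Mm)) (e i))) = ⊤)
    (d : ℕ) (hd : 1 ≤ d) (hdn : d ≤ n)
    (v v' : Fin n → Fin d → k) :
    (RIso k s t (BExt k s t (piRep s t d Mm) Nm (Gamma s t n d e v))
        (BExt k s t (piRep s t d Mm) Nm (Gamma s t n d e v')) ↔
      ∃ g : GL (Fin d) k, ∀ i, v i = (g : Matrix (Fin d) (Fin d) k).mulVec (v' i)) ∧
    (Indec k s t (BExt k s t (piRep s t d Mm) Nm (Gamma s t n d e v)) ↔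
      Matrix.rank (Matrix.of (fun (j : Fin d) (i : Fin n) => v i j)) = d) := by
  classical
  -- basic nonvanishing facts
  have hn : 0 < n := lt_of_lt_of_le hd hdn
  have he0 : e ⟨0, hn⟩ ≠ 0 := by
    intro h0
    have h1 := hindep.ne_zero ⟨0, hn⟩
    apply h1
    rw [h0]
    exact (Submodule.Quotient.mk_eq_zero _).mpr (Submodule.zero_mem _)
  obtain ⟨a0, ha0⟩ : ∃ a, e ⟨0, hn⟩ a ≠ 0 := by
    by_contra h; push_neg at h; exact he0 (funext h)
  obtain ⟨x0, hx0⟩ : ∃ x, e ⟨0, hn⟩ a0 x ≠ 0 := by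
    by_contra h; push_neg at h; exact ha0 (LinearMap.ext h)
  have hy0 : e ⟨0, hn⟩ a0 x0 ≠ 0 := hx0
  have hx0' : x0 ≠ 0 := fun h => hx0 (by rw [h, map_zero])
  have hmv : ∀ (g : Matrix (Fin d) (Fin d) k) (w : Fin d → k) (j : Fin d),
      g.mulVec w j = ∑ l, g j l * w l := by
    intro g w j; simp [Matrix.mulVec, dotProduct]
  constructor
  · -- Part 1 : isomorphism iff GL-conjugate
    constructor
    · rintro ⟨φ, hφ, hbij⟩
      obtain ⟨g, c, h1, h2, h3⟩ := hom_structure s t d Mm Nm hEndM hEndN hHomMN _ _ φ hφ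
      have hco := coeff_eq s t Mm Nm n e hindep d v v' g c h3
      have hφ2 : ∀ q (z : (Fin d → Y q) × X q), (φ q z).2 = c • z.2 := by
        intro q z
        have hsp : φ q z = φ q (z.1, 0) + φ q (0, z.2) := by
          rw [← map_add]; congr 1; simp
        rw [hsp, Prod.snd_add, h1 q z.1, h2 q z.2]
        simp
      have hc0 : c ≠ 0 := by
        intro hc
        obtain ⟨z, hz⟩ := (hbij (s a0)).2 (0, x0)
        have h4 := congrArg Prod.snd hz
        rw [hφ2 (s a0) z, hc, zero_smul] at h4
        exact hx0' h4.symm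
      -- g is invertible
      have hginj : Function.Injective (Matrix.toLin' g) := by
        intro w1 w2 hw
        have hw' : g.mulVec (w1 - w2) = 0 := by
          have : Matrix.toLin' g (w1 - w2) = 0 := by rw [map_sub, hw, sub_self]
          simpa [Matrix.toLin'_apply] using this
        have hz : φ (t a0) ((fun j => (w1 - w2) j • e ⟨0, hn⟩ a0 x0), 0) = 0 := by
          rw [h1]
          have : (fun j => ∑ l, g j l • ((w1 - w2) l • e ⟨0, hn⟩ a0 x0))
              = (0 : Fin d → Y (t a0)) := by
            funext j
            have h5 : ∑ l, g j l • ((w1 - w2) l • e ⟨0, hn⟩ a0 x0)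
                = (∑ l, g j l * (w1 - w2) l) • e ⟨0, hn⟩ a0 x0 := by
              simp [smul_smul, Finset.sum_smul]
            rw [h5, ← hmv g (w1 - w2) j, hw']
            simp
          rw [this]
          simp
        have h6 := (hbij (t a0)).1 (a₁ := ((fun j => (w1 - w2) j • e ⟨0, hn⟩ a0 x0), 0))
          (a₂ := 0) (by rw [hz, map_zero])
        have h7 : ∀ j, (w1 - w2) j • e ⟨0, hn⟩ a0 x0 = 0 := by
          intro j
          have := congrFun (congrArg Prod.fst h6) j
          simpa using this
        have h8 : w1 - w2 = 0 := by
          funext j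
          rcases smul_eq_zero.mp (h7 j) with h | h
          · exact h
          · exact absurd h hy0
        exact sub_eq_zero.mp h8
      have hgsurj := LinearMap.injective_iff_surjective.mp hginj
      let Eg := LinearEquiv.ofBijective (Matrix.toLin' g) ⟨hginj, hgsurj⟩
      let gi : Matrix (Fin d) (Fin d) k :=
        LinearMap.toMatrix' (Eg.symm : (Fin d → k) →ₗ[k] (Fin d → k))
      have hgig : gi * g = 1 := by
        have h' : Matrix.toLin' (gi * g) = Matrix.toLin' (1 : Matrix (Fin d) (Fin d) k) := by
          rw [Matrix.toLin'_mul, Matrix.toLin'_one]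
          show LinearMap.toMatrix'.symm (LinearMap.toMatrix' (Eg.symm : (Fin d → k) →ₗ[k] (Fin d → k))) ∘ₗ Matrix.toLin' g = LinearMap.id
          rw [LinearEquiv.symm_apply_apply]
          refine LinearMap.ext fun w => ?_
          simp only [LinearMap.comp_apply, LinearMap.id_apply]
          exact Eg.symm_apply_apply w
        have h'' := congrArg LinearMap.toMatrix' h'
        rwa [LinearMap.toMatrix'_toLin', LinearMap.toMatrix'_toLin'] at h''
      have hggi : g * gi = 1 := by
        have h' : Matrix.toLin' (g * gi) = Matrix.toLin' (1 : Matrix (Fin d) (Fin d) k) := by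
          rw [Matrix.toLin'_mul, Matrix.toLin'_one]
          show Matrix.toLin' g ∘ₗ LinearMap.toMatrix'.symm (LinearMap.toMatrix' (Eg.symm : (Fin d → k) →ₗ[k] (Fin d → k))) = LinearMap.id
          rw [LinearEquiv.symm_apply_apply]
          refine LinearMap.ext fun w => ?_
          simp only [LinearMap.comp_apply, LinearMap.id_apply]
          exact Eg.apply_symm_apply w
        have h'' := congrArg LinearMap.toMatrix' h'
        rwa [LinearMap.toMatrix'_toLin', LinearMap.toMatrix'_toLin'] at h''
      refine ⟨⟨c • gi, c⁻¹ • g, ?_, ?_⟩, ?_⟩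
      · rw [smul_mul_assoc, mul_smul_comm, smul_smul, mul_inv_cancel₀ hc0, one_smul, hgig]
      · rw [smul_mul_assoc, mul_smul_comm, smul_smul, inv_mul_cancel₀ hc0, one_smul, hggi]
      · intro i
        have hm : g.mulVec (v i) = c • v' i := by
          funext j
          rw [hmv g (v i) j, hco i j]
          rfl
        show v i = (c • gi).mulVec (v' i)
        rw [Matrix.smul_mulVec]
        have : gi.mulVec (c • v' i) = c • gi.mulVec (v' i) := by
          funext j
          simp [hmv, Finset.mul_sum, Pi.smul_apply, smul_eq_mul]
          refine Finset.sum_congr rfl fun l _ => ?_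
          ring
        rw [← this, ← hm, Matrix.mulVec_mulVec, hgig, Matrix.one_mulVec]
    · rintro ⟨u, hu⟩
      have hgv : ∀ i j, ∑ l, (↑u⁻¹ : Matrix (Fin d) (Fin d) k) j l * v i l = v' i j := by
        intro i j
        have h4 : (↑u⁻¹ : Matrix (Fin d) (Fin d) k).mulVec (v i) = v' i := by
          rw [hu i, Matrix.mulVec_mulVec, Units.inv_mul, Matrix.one_mulVec]
        rw [← hmv, h4]
      refine ⟨fun q => (Phi (↑u⁻¹ : Matrix (Fin d) (Fin d) k) (Y q)).prodMap
        (LinearMap.id : X q →ₗ[k] X q),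
        isRHom_construct s t d n e Mm Nm v v' _ hgv, fun q => ?_⟩
      rw [Function.bijective_iff_has_inverse]
      refine ⟨fun z => (Phi (↑u : Matrix (Fin d) (Fin d) k) (Y q) z.1, z.2), ?_, ?_⟩
      · intro z
        simp only [LinearMap.prodMap_apply, LinearMap.id_apply]
        refine Prod.ext ?_ rfl
        show Phi (↑u : Matrix (Fin d) (Fin d) k) (Y q)
          (Phi (↑u⁻¹ : Matrix (Fin d) (Fin d) k) (Y q) z.1) = z.1
        rw [Phi_comp, Units.mul_inv, Phi_one]
      · intro z
        simp only [LinearMap.prodMap_apply, LinearMap.id_apply]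
        refine Prod.ext ?_ rfl
        show Phi (↑u⁻¹ : Matrix (Fin d) (Fin d) k) (Y q)
          (Phi (↑u : Matrix (Fin d) (Fin d) k) (Y q) z.1) = z.1
        rw [Phi_comp, Units.inv_mul, Phi_one]
  · -- Part 2 : indecomposability iff full rank
    rw [rank_iff_span d n v]
    constructor
    · -- Indec → span = ⊤
      intro hind
      by_contra hsp
      obtain ⟨T, hT⟩ := Submodule.exists_isCompl (Submodule.span k (Set.range v))
      set S := Submodule.span k (Set.range v) with hSdef
      set p : (Fin d → k) →ₗ[k] (Fin d → k) := S.subtype ∘ₗ S.projectionOnto T hT with hpdef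
      set g := LinearMap.toMatrix' p with hgdef
      have hpg : ∀ w, g.mulVec w = p w := by
        intro w
        have h4 : Matrix.toLin' g w = p w := by rw [hgdef, Matrix.toLin'_toMatrix']
        rw [← h4, Matrix.toLin'_apply]
      have hmemS : ∀ w, p w ∈ S := by
        intro w
        exact ((S.projectionOnto T hT) w).2
      have hpS : ∀ w (hw : w ∈ S), p w = w := by
        intro w hw
        show ↑(S.projectionOnto T hT w) = w
        rw [show w = ((⟨w, hw⟩ : S) : Fin d → k) from rfl,
          Submodule.projectionOnto_apply_left hT ⟨w, hw⟩]
      have hpv : ∀ i, p (v i) = v i := fun i => hpS (v i) (Submodule.subset_span ⟨i, rfl⟩)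
      have hpp : ∀ w, p (p w) = p w := fun w => hpS (p w) (hmemS w)
      have hgg : g * g = g := by
        rw [hgdef, ← LinearMap.toMatrix'_comp]
        congr 1
        exact LinearMap.ext hpp
      obtain ⟨w0, hw0T, hw0⟩ : ∃ w0, w0 ∈ T ∧ w0 ≠ 0 := by
        by_contra h
        push_neg at h
        have hTbot : T = ⊥ := by
          rw [eq_bot_iff]
          intro x hx
          rcases eq_or_ne x 0 with rfl | hne
          · exact Submodule.zero_mem _
          · exact absurd (h x hx) (by simpa using hne)
        apply hsp
        have h5 := hT.codisjoint
        rw [codisjoint_iff, hTbot, sup_bot_eq] at h5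
        exact h5
      have hpw0 : p w0 = 0 := by
        show ↑(S.projectionOnto T hT w0) = (0 : Fin d → k)
        rw [show w0 = ((⟨w0, hw0T⟩ : T) : Fin d → k) from rfl,
          Submodule.projectionOnto_apply_right hT ⟨w0, hw0T⟩]
        rfl
      have hgv : ∀ i j, ∑ l, g j l * v i l = v i j := by
        intro i j
        rw [← hmv, hpg, hpv]
      set π : ∀ q, ((Fin d → Y q) × X q) →ₗ[k] ((Fin d → Y q) × X q) :=
        fun q => (Phi g (Y q)).prodMap (LinearMap.id : X q →ₗ[k] X q) with hπdef
      have hrh := isRHom_construct s t d n e Mm Nm v v g hgv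
      have hπap : ∀ q (z : (Fin d → Y q) × X q), π q z = (Phi g (Y q) z.1, z.2) := fun q z => rfl
      have hπidem : ∀ q z, π q (π q z) = π q z := by
        intro q z
        rw [hπap, hπap]
        refine Prod.ext ?_ rfl
        show Phi g (Y q) (Phi g (Y q) z.1) = Phi g (Y q) z.1
        rw [Phi_comp, hgg]
      have hcomm : ∀ (a : A) (z : (Fin d → Y (s a)) × X (s a)),
          π (t a) (BExt k s t (piRep s t d Mm) Nm (Gamma s t n d e v) a z)
            = BExt k s t (piRep s t d Mm) Nm (Gamma s t n d e v) a (π (s a) z) := by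
        intro a z
        have := DFunLike.congr_fun (hrh a) z
        simpa [LinearMap.comp_apply, hπap] using this
      rcases hind.2 (fun q => LinearMap.range (π q)) (fun q => LinearMap.ker (π q))
        (fun a z hz => by
          obtain ⟨w, rfl⟩ := hz
          exact ⟨_, hcomm a w⟩)
        (fun a z hz => by
          rw [LinearMap.mem_ker] at hz ⊢
          rw [hcomm a z, hz, map_zero])
        (fun q => by
          rw [eq_bot_iff]
          rintro x ⟨⟨z, rfl⟩, hker⟩
          have hker' : π q (π q z) = 0 := hker
          rw [hπidem] at hker'
          exact (Submodule.mem_bot k).mpr hker')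
        (fun q => by
          rw [eq_top_iff]
          intro z _
          refine Submodule.mem_sup.mpr ⟨π q z, ⟨z, rfl⟩, z - π q z, ?_, by abel⟩
          rw [LinearMap.mem_ker, map_sub, hπidem, sub_self]) with hUbot | hWbot
      · have h5 : ((0 : Fin d → Y (s a0)), x0) ∈ LinearMap.range (π (s a0)) := by
          refine ⟨((0 : Fin d → Y (s a0)), x0), ?_⟩
          rw [hπap]
          refine Prod.ext ?_ rfl
          show Phi g (Y (s a0)) 0 = 0
          exact map_zero _
        rw [hUbot (s a0)] at h5
        have := (Submodule.mem_bot k).mp h5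
        exact hx0' (congrArg Prod.snd this)
      · have h5 : ((fun j => w0 j • e ⟨0, hn⟩ a0 x0), (0 : X (t a0)))
            ∈ LinearMap.ker (π (t a0)) := by
          rw [LinearMap.mem_ker, hπap]
          refine Prod.ext ?_ rfl
          show Phi g (Y (t a0)) (fun j => w0 j • e ⟨0, hn⟩ a0 x0) = 0
          funext j
          rw [Phi_apply]
          have h6 : ∑ l, g j l • (w0 l • e ⟨0, hn⟩ a0 x0)
              = (∑ l, g j l * w0 l) • e ⟨0, hn⟩ a0 x0 := by
            simp [smul_smul, Finset.sum_smul]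
          rw [h6, ← hmv, hpg, hpw0]
          simp
        rw [hWbot (t a0)] at h5
        have h7 := (Submodule.mem_bot k).mp h5
        obtain ⟨j0, hj0⟩ : ∃ j, w0 j ≠ 0 := by
          by_contra h; push_neg at h; exact hw0 (funext h)
        have := congrFun (congrArg Prod.fst h7) j0
        simp only [Prod.fst_zero, Pi.zero_apply] at this
        rcases smul_eq_zero.mp this with h | h
        · exact hj0 h
        · exact hy0 h
    · -- span = ⊤ → Indec
      intro hsp
      constructor
      · exact ⟨s a0, ((0 : Fin d → Y (s a0)), x0), fun h => hx0' (congrArg Prod.snd h)⟩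
      · intro U W hU hW hinf hsup
        have hcompl : ∀ q, IsCompl (U q) (W q) := fun q =>
          ⟨disjoint_iff.mpr (hinf q), codisjoint_iff.mpr (hsup q)⟩
        set π : ∀ q, ((Fin d → Y q) × X q) →ₗ[k] ((Fin d → Y q) × X q) :=
          fun q => (U q).subtype ∘ₗ (U q).projectionOnto (W q) (hcompl q) with hπdef
        have hπU : ∀ q x, x ∈ U q → π q x = x := by
          intro q x hx
          have h9 := Submodule.projectionOnto_apply_left (hcompl q) (⟨x, hx⟩ : U q)
          show (U q).subtype ((U q).projectionOnto (W q) (hcompl q) x) = x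
          rw [h9]
          rfl
        have hπW : ∀ q x, x ∈ W q → π q x = 0 := by
          intro q x hx
          have h9 := Submodule.projectionOnto_apply_right (hcompl q) (⟨x, hx⟩ : W q)
          show (U q).subtype ((U q).projectionOnto (W q) (hcompl q) x) = 0
          rw [h9, map_zero]
        have hπmem : ∀ q z, π q z ∈ U q := fun q z =>
          ((U q).projectionOnto (W q) (hcompl q) z).2
        have hidem : ∀ q z, π q (π q z) = π q z := fun q z => hπU q _ (hπmem q z)
        have hrh : IsRHom k s t (BExt k s t (piRep s t d Mm) Nm (Gamma s t n d e v))
            (BExt k s t (piRep s t d Mm) Nm (Gamma s t n d e v)) π := by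
          intro a
          refine LinearMap.ext fun z => ?_
          have hz : z ∈ U (s a) ⊔ W (s a) := by rw [hsup (s a)]; exact Submodule.mem_top
          obtain ⟨uu, huu, ww, hww, rfl⟩ := Submodule.mem_sup.mp hz
          simp only [LinearMap.comp_apply, map_add]
          rw [hπU (s a) uu huu, hπW (s a) ww hww,
            hπU (t a) _ (hU a uu huu), hπW (t a) _ (hW a ww hww)]
          simp
        obtain ⟨g, c, h1, h2, h3⟩ := hom_structure s t d Mm Nm hEndM hEndN hHomMN _ _ π hrh
        have hco := coeff_eq s t Mm Nm n e hindep d v v g c h3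
        -- g acts as multiplication by c
        have hgc : ∀ w : Fin d → k, g.mulVec w = c • w := by
          have hlin : Matrix.toLin' g = (c • LinearMap.id : (Fin d → k) →ₗ[k] (Fin d → k)) := by
            apply LinearMap.ext_on hsp
            rintro x ⟨i, rfl⟩
            rw [Matrix.toLin'_apply]
            funext j
            rw [hmv, hco i j]
            simp
          intro w
          have := DFunLike.congr_fun hlin w
          rw [Matrix.toLin'_apply] at this
          simpa using this
        have hgentry : ∀ j l, g j l = if j = l then c else 0 := by
          intro j l
          have h5 := congrFun (hgc (Pi.single l 1)) j
          rw [Matrix.mulVec_single_one] at h5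
          simp only [Matrix.col_apply] at h5
          rw [h5]
          simp [Pi.single_apply]
        have h2nd : ∀ q (z : (Fin d → Y q) × X q), (π q z).2 = c • z.2 := by
          intro q z
          have hsplit : π q z = π q (z.1, 0) + π q (0, z.2) := by
            rw [← map_add]; congr 1; simp
          rw [hsplit, Prod.snd_add, h1 q z.1, h2 q z.2]
          simp
        have hc2 : c * c = c := by
          have hzz := hidem (s a0) (0, x0)
          have h4 := congrArg Prod.snd hzz
          rw [h2nd (s a0) (π (s a0) (0, x0)), h2nd (s a0) (0, x0)] at h4
          simp only at h4
          have h5 : (c * c - c) • x0 = 0 := by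
            rw [sub_smul, mul_smul, h4, sub_self]
          rcases smul_eq_zero.mp h5 with h | h
          · exact sub_eq_zero.mp h
          · exact absurd h hx0'
        have hcc : c = 0 ∨ c = 1 := by
          have h6 : c * (c - 1) = 0 := by ring_nf; linear_combination hc2
          rcases mul_eq_zero.mp h6 with h | h
          · exact Or.inl h
          · exact Or.inr (by linear_combination h)
        rcases hcc with rfl | rfl
        · -- c = 0 : π = 0, left branch
          left
          have hπ0 : ∀ q z, π q z = 0 := by
            intro q z
            rw [← hidem q z]
            have hz2 : π q z = ((π q z).1, 0) := by
              refine Prod.ext rfl ?_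
              rw [h2nd]; simp
            conv_lhs => rw [hz2]
            rw [h1]
            refine Prod.ext ?_ rfl
            funext j
            simp only
            rw [Finset.sum_eq_zero]
            · rfl
            · intro l _
              rw [hgentry]
              simp
          intro q
          rw [eq_bot_iff]
          intro x hx
          have := hπU q x hx
          rw [hπ0 q x] at this
          simp [← this]
        · -- c = 1 : π = id, right branch
          right
          have hgid : ∀ q (y : Fin d → Y q), (fun j => ∑ l, g j l • y l) = y := by
            intro q y
            funext j
            rw [Finset.sum_eq_single j]
            · rw [hgentry]; simp
            · intro l _ hne
              rw [hgentry]
              simp [Ne.symm hne]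
            · intro h; exact absurd (Finset.mem_univ j) h
          have hπfst : ∀ q (x : X q), (π q (0, x)).1 = 0 := by
            intro q x
            have hzz := hidem q (0, x)
            have hz2 : π q (0, x) = ((π q (0, x)).1, x) := by
              refine Prod.ext rfl ?_
              rw [h2]; simp
            have h4 := congrArg Prod.fst hzz
            conv_lhs at h4 => rw [hz2]
            have hsplit : π q ((π q (0, x)).1, x)
                = π q ((π q (0, x)).1, 0) + π q (0, x) := by
              rw [← map_add]; congr 1; simp
            rw [hsplit, Prod.fst_add, h1, hgid] at h4
            simp only at h4
            exact add_eq_left.mp h4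
          have hπid : ∀ q z, π q z = z := by
            intro q z
            have hsplit : π q z = π q (z.1, 0) + π q (0, z.2) := by
              rw [← map_add]; congr 1; simp
            rw [hsplit, h1, hgid]
            have hsnd : π q (0, z.2) = (0, z.2) := by
              refine Prod.ext (hπfst q z.2) ?_
              rw [h2]; simp
            rw [hsnd]
            simp
          intro q
          rw [eq_bot_iff]
          intro x hx
          have h5 := hπW q x hx
          rw [hπid q x] at h5
          simp [h5]
end

section
/- Let M and N be representations of Q and, for each pair X,Y ∈ {M,N}, let R_{X,Y} ⊆ R(X,Y) be a subset representing a basis of Ext(X,Y) (write R_X := R_{X,X}). For each e ∈ R(N,M), with associated extension 0 → M → B → N → 0 where B = B(e), there exist subsets R'_M ⊆ R_M, R'_N ⊆ R_N and R'_{N,M} ⊆ R_{N,M} such that, under the identification R(B,B) ≅ R(N,N) ⊕ R(N,M) ⊕ R(M,N) ⊕ R(M,M) induced by B_q = M_q ⊕ N_q, the set R'_M ∪ R'_N ∪ R'_{N,M} ∪ R_{M,N} represents a basis of Ext(B,B). -/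
open QuivRep

variable {k : Type} [Field k] {V A : Type} [Fintype V] [Fintype A] (s t : A → V)
variable {X Y : V → Type}
  [∀ q, AddCommGroup (X q)] [∀ q, Module k (X q)] [∀ q, FiniteDimensional k (X q)]
  [∀ q, AddCommGroup (Y q)] [∀ q, Module k (Y q)] [∀ q, FiniteDimensional k (Y q)]

/-- A subset `S ⊆ R(N,M)` represents a basis of `Ext(N,M)`: the projection
`π_{N,M}` restricts to a bijection from `S` onto a `k`-basis of `Ext(N,M)`. -/
def RepBasis (Nm : RSp k s t X X) (Mm : RSp k s t Y Y) (S : Set (RSp k s t X Y)) : Prop :=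
  LinearIndependent k (fun x : S =>
    Submodule.Quotient.mk (p := LinearMap.range (dMap k s t Nm Mm)) (x : RSp k s t X Y)) ∧
  Submodule.span k
    ((fun x => Submodule.Quotient.mk (p := LinearMap.range (dMap k s t Nm Mm)) x) '' S) = ⊤

/-- Embedding `R(M,M) → R(B,B)` (block `(1,1)`), under `B_q = M_q ⊕ N_q = Y_q × X_q`. -/
def embMM (f : RSp k s t Y Y) : RSp k s t (fun q => Y q × X q) (fun q => Y q × X q) :=
  fun a => (LinearMap.inl k (Y (t a)) (X (t a))).comp
    ((f a).comp (LinearMap.fst k (Y (s a)) (X (s a))))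

/-- Embedding `R(N,N) → R(B,B)` (block `(2,2)`). -/
def embNN (f : RSp k s t X X) : RSp k s t (fun q => Y q × X q) (fun q => Y q × X q) :=
  fun a => (LinearMap.inr k (Y (t a)) (X (t a))).comp
    ((f a).comp (LinearMap.snd k (Y (s a)) (X (s a))))

/-- Embedding `R(N,M) → R(B,B)` (block `(1,2)`). -/
def embNM (f : RSp k s t X Y) : RSp k s t (fun q => Y q × X q) (fun q => Y q × X q) :=
  fun a => (LinearMap.inl k (Y (t a)) (X (t a))).comp
    ((f a).comp (LinearMap.snd k (Y (s a)) (X (s a))))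

/-- Embedding `R(M,N) → R(B,B)` (block `(2,1)`). -/
def embMN (f : RSp k s t Y X) : RSp k s t (fun q => Y q × X q) (fun q => Y q × X q) :=
  fun a => (LinearMap.inr k (Y (t a)) (X (t a))).comp
    ((f a).comp (LinearMap.fst k (Y (s a)) (X (s a))))

set_option linter.unusedSectionVars false
set_option maxHeartbeats 1000000

section Helpers

variable {k : Type} [Field k] {W : Type} [AddCommGroup W] [Module k W]

lemma lc_eq_zero_of_subset {l : W →₀ k} {T : Set W} (hsupp : ↑l.support ⊆ T)
    {U : Type} [AddCommGroup U] [Module k U] (f : W →ₗ[k] U) (F : Submodule k W)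
    (hT : T ⊆ F) (hker : F ≤ LinearMap.ker f) :
    Finsupp.linearCombination k (⇑f) l = 0 := by
  rw [Finsupp.linearCombination_apply, Finsupp.sum]
  refine Finset.sum_eq_zero fun x hx => ?_
  have : f x = 0 := hker (hT (hsupp hx))
  simp [this]

lemma lc_mkQ_eq (P : Submodule k W) (l : W →₀ k) :
    Finsupp.linearCombination k (⇑P.mkQ) l
      = P.mkQ (Finsupp.linearCombination k (id : W → W) l) := by
  rw [Finsupp.apply_linearCombination, Function.comp_id]

lemma map_mkQ_eq_bot {P Q' : Submodule k W} (h : Q' ≤ P) :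
    Submodule.map P.mkQ Q' = ⊥ := by
  rw [eq_bot_iff]
  rintro x ⟨y, hy, rfl⟩
  simpa [Submodule.mem_bot, Submodule.mkQ_apply, Submodule.Quotient.mk_eq_zero] using h hy

lemma choose_preimages {Q' : Type} [AddCommGroup Q'] [Module k Q']
    (π : W →ₗ[k] Q') (Tset : Set W) (b : Set Q') (hb : b ⊆ ⇑π '' Tset) :
    ∃ S : Set W, S ⊆ Tset ∧ ⇑π '' S = b ∧ Set.InjOn ⇑π S := by
  classical
  have h : ∀ y : Q', y ∈ b → ∃ x, x ∈ Tset ∧ π x = y := fun y hy => hb hy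
  choose f hf1 hf2 using h
  refine ⟨{x | ∃ y, ∃ hy : y ∈ b, f y hy = x}, ?_, ?_, ?_⟩
  · rintro x ⟨y, hy, rfl⟩; exact hf1 y hy
  · apply Set.eq_of_subset_of_subset
    · rintro _ ⟨x, ⟨y, hy, rfl⟩, rfl⟩
      rw [hf2 y hy]; exact hy
    · intro y hy; exact ⟨f y hy, ⟨y, hy, rfl⟩, hf2 y hy⟩
  · rintro x1 ⟨y1, hy1, rfl⟩ x2 ⟨y2, hy2, rfl⟩ hpi
    rw [hf2 y1 hy1, hf2 y2 hy2] at hpi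
    subst hpi
    rfl

open Submodule in
lemma abstract_filtration (D F1 F2 : Submodule k W) (h12 : F1 ≤ F2)
    (S1 S2 S3 : Set W) (hS1 : S1 ⊆ ↑F1) (hS2 : S2 ⊆ ↑F2)
    (i1 : LinearIndependent k (fun x : S1 => Submodule.Quotient.mk (p := D) x.1))
    (i2 : LinearIndependent k (fun x : S2 => Submodule.Quotient.mk (p := F1 ⊔ D) x.1))
    (i3 : LinearIndependent k (fun x : S3 => Submodule.Quotient.mk (p := F2 ⊔ D) x.1))
    (sp1 : F1 ≤ span k S1 ⊔ D)
    (sp2 : F2 ≤ span k S2 ⊔ F1 ⊔ D)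
    (sp3 : ⊤ ≤ span k S3 ⊔ F2 ⊔ D) :
    LinearIndependent k (fun x : (S1 ∪ S2 ∪ S3 : Set W) =>
      Submodule.Quotient.mk (p := D) x.1) ∧
    span k ((fun x => Submodule.Quotient.mk (p := D) x) '' (S1 ∪ S2 ∪ S3)) = ⊤ := by
  classical
  constructor
  · rw [show (fun x : (S1 ∪ S2 ∪ S3 : Set W) => Submodule.Quotient.mk (p := D) x.1)
        = (⇑D.mkQ ∘ (Subtype.val : (S1 ∪ S2 ∪ S3 : Set W) → W)) from rfl,
      linearIndependent_comp_subtype_iff, linearIndepOn_iff]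
    intro l hl hl0
    rw [Finsupp.mem_supported] at hl
    set l3 := l.filter (· ∈ S3) with hl3def
    set l' := l.filter (fun x => ¬ x ∈ S3) with hl'def
    have hdec1 : l3 + l' = l := Finsupp.filter_pos_add_filter_neg l _
    set l2 := l'.filter (· ∈ S2) with hl2def
    set l1 := l'.filter (fun x => ¬ x ∈ S2) with hl1def
    have hdec2 : l2 + l1 = l' := Finsupp.filter_pos_add_filter_neg l' _
    have hsupp3 : ↑l3.support ⊆ S3 := by
      intro x hx
      simp only [hl3def, Finsupp.support_filter, Finset.coe_filter, Set.mem_setOf_eq] at hx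
      exact hx.2
    have hsupp2 : ↑l2.support ⊆ S2 := by
      intro x hx
      simp only [hl2def, hl'def, Finsupp.support_filter, Finset.coe_filter,
        Set.mem_setOf_eq, Finset.mem_filter] at hx
      exact hx.2
    have hsupp1 : ↑l1.support ⊆ S1 := by
      have hsub : l1.support
          ⊆ (l.support.filter (fun x => ¬ x ∈ S3)).filter (fun x => ¬ x ∈ S2) := by
        rw [hl1def, Finsupp.support_filter, hl'def, Finsupp.support_filter]
      intro x hx
      have hx' := hsub hx
      rw [Finset.mem_filter, Finset.mem_filter] at hx'
      obtain ⟨⟨hxl, hx3⟩, hx2⟩ := hx'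
      rcases hl hxl with (h | h) | h
      · exact h
      · exact absurd h hx2
      · exact absurd h hx3
    have i3' := (linearIndependent_comp_subtype_iff.trans linearIndepOn_iff).mp
      (show LinearIndependent k (⇑(F2 ⊔ D).mkQ ∘ (Subtype.val : S3 → W)) from i3)
    have i2' := (linearIndependent_comp_subtype_iff.trans linearIndepOn_iff).mp
      (show LinearIndependent k (⇑(F1 ⊔ D).mkQ ∘ (Subtype.val : S2 → W)) from i2)
    have i1' := (linearIndependent_comp_subtype_iff.trans linearIndepOn_iff).mp
      (show LinearIndependent k (⇑D.mkQ ∘ (Subtype.val : S1 → W)) from i1)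
    have hvD : Finsupp.linearCombination k (id : W → W) l ∈ D := by
      rw [lc_mkQ_eq] at hl0
      exact (Submodule.Quotient.mk_eq_zero D).mp hl0
    have hl30 : Finsupp.linearCombination k (⇑(F2 ⊔ D).mkQ) l3 = 0 := by
      have htot : Finsupp.linearCombination k (⇑(F2 ⊔ D).mkQ) l3
          + (Finsupp.linearCombination k (⇑(F2 ⊔ D).mkQ) l2
          + Finsupp.linearCombination k (⇑(F2 ⊔ D).mkQ) l1)
          = Finsupp.linearCombination k (⇑(F2 ⊔ D).mkQ) l := by
        rw [← map_add, ← map_add, hdec2, hdec1]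
      have h2 : Finsupp.linearCombination k (⇑(F2 ⊔ D).mkQ) l2 = 0 :=
        lc_eq_zero_of_subset hsupp2 _ F2 hS2 (by rw [Submodule.ker_mkQ]; exact le_sup_left)
      have h1 : Finsupp.linearCombination k (⇑(F2 ⊔ D).mkQ) l1 = 0 :=
        lc_eq_zero_of_subset hsupp1 _ F1 hS1
          (by rw [Submodule.ker_mkQ]; exact le_trans h12 le_sup_left)
      have hL : Finsupp.linearCombination k (⇑(F2 ⊔ D).mkQ) l = 0 := by
        rw [lc_mkQ_eq]
        exact (Submodule.Quotient.mk_eq_zero _).mpr (le_sup_right (a := F2) hvD)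
      rw [h1, h2, hL] at htot
      simpa using htot
    have hl3 : l3 = 0 := i3' l3 ((Finsupp.mem_supported k _).mpr hsupp3) hl30
    have hll : l2 + l1 = l := by rw [hdec2]; rw [← hdec1, hl3, zero_add]
    have hl20 : Finsupp.linearCombination k (⇑(F1 ⊔ D).mkQ) l2 = 0 := by
      have htot : Finsupp.linearCombination k (⇑(F1 ⊔ D).mkQ) l2
          + Finsupp.linearCombination k (⇑(F1 ⊔ D).mkQ) l1
          = Finsupp.linearCombination k (⇑(F1 ⊔ D).mkQ) l := by
        rw [← map_add, hll]
      have h1 : Finsupp.linearCombination k (⇑(F1 ⊔ D).mkQ) l1 = 0 :=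
        lc_eq_zero_of_subset hsupp1 _ F1 hS1 (by rw [Submodule.ker_mkQ]; exact le_sup_left)
      have hL : Finsupp.linearCombination k (⇑(F1 ⊔ D).mkQ) l = 0 := by
        rw [lc_mkQ_eq]
        exact (Submodule.Quotient.mk_eq_zero _).mpr (le_sup_right (a := F1) hvD)
      rw [h1, hL] at htot
      simpa using htot
    have hl2 : l2 = 0 := i2' l2 ((Finsupp.mem_supported k _).mpr hsupp2) hl20
    have hl1eq : l1 = l := by rw [← hll, hl2, zero_add]
    have hl1 : l1 = 0 := i1' l1 ((Finsupp.mem_supported k _).mpr hsupp1)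
      (by rw [hl1eq]; exact hl0)
    rw [← hl1eq, hl1]
  · have hsp : span k (S1 ∪ S2 ∪ S3) ⊔ D = ⊤ := by
      rw [eq_top_iff]
      refine le_trans sp3 ?_
      have h3 : span k S3 ≤ span k (S1 ∪ S2 ∪ S3) := span_mono (by intro x hx; exact Or.inr hx)
      have h2' : span k S2 ≤ span k (S1 ∪ S2 ∪ S3) :=
        span_mono (by intro x hx; exact Or.inl (Or.inr hx))
      have h1' : span k S1 ≤ span k (S1 ∪ S2 ∪ S3) :=
        span_mono (by intro x hx; exact Or.inl (Or.inl hx))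
      have hF1 : F1 ≤ span k (S1 ∪ S2 ∪ S3) ⊔ D :=
        le_trans sp1 (sup_le_sup_right h1' D)
      have hF2 : F2 ≤ span k (S1 ∪ S2 ∪ S3) ⊔ D := by
        refine le_trans sp2 ?_
        rw [sup_assoc]
        exact sup_le (le_trans h2' le_sup_left) (sup_le hF1 le_sup_right)
      exact sup_le (sup_le (le_trans h3 le_sup_left) hF2) le_sup_right
    have : (fun x : W => Submodule.Quotient.mk (p := D) x) = ⇑D.mkQ := rfl
    rw [this, Submodule.span_image, eq_top_iff]
    intro y _
    obtain ⟨x, rfl⟩ := D.mkQ_surjective y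
    have hx : x ∈ span k (S1 ∪ S2 ∪ S3) ⊔ D := by rw [hsp]; trivial
    obtain ⟨a, ha, b, hb, rfl⟩ := Submodule.mem_sup.mp hx
    rw [map_add]
    have hb0 : D.mkQ b = 0 := (Submodule.Quotient.mk_eq_zero D).mpr hb
    rw [hb0, add_zero]
    exact Submodule.mem_map_of_mem ha

end Helpers
-- Linearized embeddings
def eMM : RSp k s t Y Y →ₗ[k] RSp k s t (fun q => Y q × X q) (fun q => Y q × X q) where
  toFun := embMM s t
  map_add' f g := by funext a; ext z <;> simp [embMM]
  map_smul' c f := by funext a; ext z <;> simp [embMM]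

def eNN : RSp k s t X X →ₗ[k] RSp k s t (fun q => Y q × X q) (fun q => Y q × X q) where
  toFun := embNN s t
  map_add' f g := by funext a; ext z <;> simp [embNN]
  map_smul' c f := by funext a; ext z <;> simp [embNN]

def eNM : RSp k s t X Y →ₗ[k] RSp k s t (fun q => Y q × X q) (fun q => Y q × X q) where
  toFun := embNM s t
  map_add' f g := by funext a; ext z <;> simp [embNM]
  map_smul' c f := by funext a; ext z <;> simp [embNM]

def eMN : RSp k s t Y X →ₗ[k] RSp k s t (fun q => Y q × X q) (fun q => Y q × X q) where
  toFun := embMN s t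
  map_add' f g := by funext a; ext z <;> simp [embMN]
  map_smul' c f := by funext a; ext z <;> simp [embMN]
-- Projection onto the (M,N)=(Y,X) block
def pMN : RSp k s t (fun q => Y q × X q) (fun q => Y q × X q) →ₗ[k] RSp k s t Y X where
  toFun g := fun a => (LinearMap.snd k (Y (t a)) (X (t a))).comp
    ((g a).comp (LinearMap.inl k (Y (s a)) (X (s a))))
  map_add' f g := by funext a; ext z <;> simp
  map_smul' c f := by funext a; ext z <;> simp

section KLemmas

variable (Mm : RSp k s t Y Y) (Nm : RSp k s t X X) (e : RSp k s t X Y)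

-- lifts of block homs to homs of B
def liftNM (g : ∀ q, X q →ₗ[k] Y q) : ∀ q, (Y q × X q) →ₗ[k] (Y q × X q) :=
  fun q => (LinearMap.inl k (Y q) (X q)).comp ((g q).comp (LinearMap.snd k (Y q) (X q)))

def liftMM (g : ∀ q, Y q →ₗ[k] Y q) : ∀ q, (Y q × X q) →ₗ[k] (Y q × X q) :=
  fun q => (LinearMap.inl k (Y q) (X q)).comp ((g q).comp (LinearMap.fst k (Y q) (X q)))

def liftNN (g : ∀ q, X q →ₗ[k] X q) : ∀ q, (Y q × X q) →ₗ[k] (Y q × X q) :=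
  fun q => (LinearMap.inr k (Y q) (X q)).comp ((g q).comp (LinearMap.snd k (Y q) (X q)))

def liftMN (g : ∀ q, Y q →ₗ[k] X q) : ∀ q, (Y q × X q) →ₗ[k] (Y q × X q) :=
  fun q => (LinearMap.inr k (Y q) (X q)).comp ((g q).comp (LinearMap.fst k (Y q) (X q)))

lemma K1 (g : ∀ q, X q →ₗ[k] Y q) :
    dMap k s t (BExt k s t Mm Nm e) (BExt k s t Mm Nm e) (liftNM g)
      = eNM s t (dMap k s t Nm Mm g) := by
  funext a; ext z <;>
    simp [dMap, BExt, eNM, embNM, liftNM]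

lemma K2 (g : ∀ q, Y q →ₗ[k] Y q) :
    dMap k s t (BExt k s t Mm Nm e) (BExt k s t Mm Nm e) (liftMM g)
      = eMM s t (dMap k s t Mm Mm g)
        + eNM s t (fun a => (g (t a)).comp (e a)) := by
  funext a; ext z <;>
    simp [dMap, BExt, eMM, embMM, eNM, embNM, liftMM]

lemma K3 (g : ∀ q, X q →ₗ[k] X q) :
    dMap k s t (BExt k s t Mm Nm e) (BExt k s t Mm Nm e) (liftNN g)
      = eNN s t (dMap k s t Nm Nm g)
        - eNM s t (fun a => (e a).comp (g (s a))) := by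
  funext a; ext z <;>
    simp [dMap, BExt, eNN, embNN, eNM, embNM, liftNN]

lemma K4 (g : ∀ q, Y q →ₗ[k] X q) :
    dMap k s t (BExt k s t Mm Nm e) (BExt k s t Mm Nm e) (liftMN g)
      = eMN s t (dMap k s t Mm Nm g)
        + eNN s t (fun a => (g (t a)).comp (e a))
        - eMM s t (fun a => (e a).comp (g (s a))) := by
  funext a; ext z <;>
    simp [dMap, BExt, eMN, embMN, eNN, embNN, eMM, embMM, liftMN]

lemma K5 (f : ∀ q, (Y q × X q) →ₗ[k] (Y q × X q)) :
    pMN s t (dMap k s t (BExt k s t Mm Nm e) (BExt k s t Mm Nm e) f)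
      = dMap k s t Mm Nm (fun q => (LinearMap.snd k (Y q) (X q)).comp
          ((f q).comp (LinearMap.inl k (Y q) (X q)))) := by
  funext a; ext z
  simp [dMap, BExt, pMN]

end KLemmas
set_option linter.unusedSectionVars false

lemma pMN_eMN (g : RSp k s t Y X) : pMN s t (eMN s t g) = g := by
  funext a; ext z; simp [pMN, eMN, embMN]

lemma pMN_eMM (g : RSp k s t Y Y) : pMN s t (eMM (X := X) s t g) = 0 := by
  funext a; ext z; simp [pMN, eMM, embMM]

lemma pMN_eNN (g : RSp k s t X X) : pMN s t (eNN (Y := Y) s t g) = 0 := by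
  funext a; ext z; simp [pMN, eNN, embNN]

lemma pMN_eNM (g : RSp k s t X Y) : pMN s t (eNM s t g) = 0 := by
  funext a; ext z; simp [pMN, eNM, embNM]

lemma decompB (v : RSp k s t (fun q => Y q × X q) (fun q => Y q × X q)) :
    v = eMM s t (fun a => (LinearMap.fst k (Y (t a)) (X (t a))).comp
          ((v a).comp (LinearMap.inl k (Y (s a)) (X (s a)))))
      + eNN s t (fun a => (LinearMap.snd k (Y (t a)) (X (t a))).comp
          ((v a).comp (LinearMap.inr k (Y (s a)) (X (s a)))))
      + eNM s t (fun a => (LinearMap.fst k (Y (t a)) (X (t a))).comp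
          ((v a).comp (LinearMap.inr k (Y (s a)) (X (s a)))))
      + eMN s t (pMN s t v) := by
  funext a; ext z <;>
    simp [eMM, embMM, eNN, embNN, eNM, embNM, eMN, embMN, pMN, Prod.mk_zero_zero, map_zero]

/-- Lemma `tree-shaped-basis`.  If `R_{X,Y} ⊆ R(X,Y)` represents a
basis of `Ext(X,Y)` for all `X,Y ∈ {M,N}`, then for each `e ∈ R(N,M)`, with `B = B(e)`,
there are subsets `R'_M ⊆ R_M`, `R'_N ⊆ R_N`, `R'_{N,M} ⊆ R_{N,M}` such that, under the
identification `R(B,B) ≅ R(N,N) ⊕ R(N,M) ⊕ R(M,N) ⊕ R(M,M)`, the set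
`R'_M ∪ R'_N ∪ R'_{N,M} ∪ R_{M,N}` represents a basis of `Ext(B,B)`. -/
theorem statement8
    (Mm : RSp k s t Y Y) (Nm : RSp k s t X X)
    (RM : Set (RSp k s t Y Y)) (RN : Set (RSp k s t X X))
    (RNM : Set (RSp k s t X Y)) (RMN : Set (RSp k s t Y X))
    (hRM : RepBasis s t Mm Mm RM) (hRN : RepBasis s t Nm Nm RN)
    (hRNM : RepBasis s t Nm Mm RNM) (hRMN : RepBasis s t Mm Nm RMN)
    (e : RSp k s t X Y) :
    ∃ RM' ⊆ RM, ∃ RN' ⊆ RN, ∃ RNM' ⊆ RNM,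
      RepBasis s t (BExt k s t Mm Nm e) (BExt k s t Mm Nm e)
        ((embMM s t '' RM') ∪ (embNN s t '' RN') ∪ (embNM s t '' RNM') ∪
          (embMN s t '' RMN)) := by
  classical
  -- abbreviations
  set eMM' := eMM (k := k) (X := X) (Y := Y) s t with heMM'
  set eNN' := eNN (k := k) (X := X) (Y := Y) s t with heNN'
  set eNM' := eNM (k := k) (X := X) (Y := Y) s t with heNM'
  set eMN' := eMN (k := k) (X := X) (Y := Y) s t with heMN'
  set dNM := dMap k s t Nm Mm with hdNM
  set dMM := dMap k s t Mm Mm with hdMM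
  set dNN := dMap k s t Nm Nm with hdNN
  set dMN := dMap k s t Mm Nm with hdMN
  set Bm := BExt k s t Mm Nm e with hBm
  set D := LinearMap.range (dMap k s t Bm Bm) with hD
  set F1 := LinearMap.range eNM' with hF1
  set F2 := F1 ⊔ LinearMap.range eMM' ⊔ LinearMap.range eNN' with hF2
  have hF1leF2 : F1 ≤ F2 := le_trans le_sup_left le_sup_left
  have hMMleF2 : LinearMap.range eMM' ≤ F2 := le_trans le_sup_right le_sup_left
  have hNNleF2 : LinearMap.range eNN' ≤ F2 := le_sup_right
  -- span forms of the RepBasis hypotheses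
  have hmkq : ∀ {W : Type} [AddCommGroup W] [Module k W] (P : Submodule k W),
      (fun x : W => Submodule.Quotient.mk (p := P) x) = ⇑P.mkQ := fun _ => rfl
  have hRNMsp : Submodule.span k RNM ⊔ LinearMap.range dNM = ⊤ := by
    have h := hRNM.2
    rw [hmkq, Submodule.span_image, Submodule.map_mkQ_eq_top] at h
    rwa [sup_comm] at h
  have hRMsp : Submodule.span k RM ⊔ LinearMap.range dMM = ⊤ := by
    have h := hRM.2
    rw [hmkq, Submodule.span_image, Submodule.map_mkQ_eq_top] at h
    rwa [sup_comm] at h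
  have hRNsp : Submodule.span k RN ⊔ LinearMap.range dNN = ⊤ := by
    have h := hRN.2
    rw [hmkq, Submodule.span_image, Submodule.map_mkQ_eq_top] at h
    rwa [sup_comm] at h
  have hRMNsp : Submodule.span k RMN ⊔ LinearMap.range dMN = ⊤ := by
    have h := hRMN.2
    rw [hmkq, Submodule.span_image, Submodule.map_mkQ_eq_top] at h
    rwa [sup_comm] at h
  -- block computation consequences
  have hA : Submodule.map eNM' (LinearMap.range dNM) ≤ D := by
    rintro _ ⟨_, ⟨g, rfl⟩, rfl⟩
    exact ⟨liftNM g, K1 s t Mm Nm e g⟩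
  have hB : Submodule.map eMM' (LinearMap.range dMM) ≤ F1 ⊔ D := by
    rintro _ ⟨_, ⟨g, rfl⟩, rfl⟩
    have h := K2 s t Mm Nm e g
    have heq : eMM' (dMM g) = dMap k s t Bm Bm (liftMM g)
        - eNM' (fun a => (g (t a)).comp (e a)) := by
      rw [h]; abel
    rw [heq]
    exact Submodule.sub_mem _ (Submodule.mem_sup_right ⟨liftMM g, rfl⟩)
      (Submodule.mem_sup_left ⟨_, rfl⟩)
  have hC : Submodule.map eNN' (LinearMap.range dNN) ≤ F1 ⊔ D := by
    rintro _ ⟨_, ⟨g, rfl⟩, rfl⟩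
    have h := K3 s t Mm Nm e g
    have heq : eNN' (dNN g) = dMap k s t Bm Bm (liftNN g)
        + eNM' (fun a => (e a).comp (g (s a))) := by
      rw [h]; abel
    rw [heq]
    exact Submodule.add_mem _ (Submodule.mem_sup_right ⟨liftNN g, rfl⟩)
      (Submodule.mem_sup_left ⟨_, rfl⟩)
  have hDD : Submodule.map eMN' (LinearMap.range dMN) ≤ F2 ⊔ D := by
    rintro _ ⟨_, ⟨g, rfl⟩, rfl⟩
    have h := K4 s t Mm Nm e g
    have heq : eMN' (dMN g) = dMap k s t Bm Bm (liftMN g)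
        - eNN' (fun a => (g (t a)).comp (e a))
        + eMM' (fun a => (e a).comp (g (s a))) := by
      rw [h]; abel
    rw [heq]
    refine Submodule.add_mem _ (Submodule.sub_mem _
      (Submodule.mem_sup_right ⟨liftMN g, rfl⟩)
      (Submodule.mem_sup_left (hNNleF2 ⟨_, rfl⟩)))
      (Submodule.mem_sup_left (hMMleF2 ⟨_, rfl⟩))
  ------------------------------------------------------------------
  -- Level 1 : the (N,M) block, w.r.t. D
  ------------------------------------------------------------------
  have hπD : Submodule.map D.mkQ D = ⊥ := map_mkQ_eq_bot le_rfl
  have hF1eq : F1 = Submodule.map eNM' (Submodule.span k RNM)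
      ⊔ Submodule.map eNM' (LinearMap.range dNM) := by
    rw [← Submodule.map_sup, hRNMsp, Submodule.map_top]
  have hT1span : Submodule.span k (⇑D.mkQ '' (⇑eNM' '' RNM)) = Submodule.map D.mkQ F1 := by
    have e1 : Submodule.span k (⇑D.mkQ '' (⇑eNM' '' RNM))
        = Submodule.map D.mkQ (Submodule.map eNM' (Submodule.span k RNM)) := by
      rw [Submodule.span_image, Submodule.span_image]
    apply le_antisymm
    · rw [Submodule.span_le]
      rintro _ ⟨_, ⟨g, hg, rfl⟩, rfl⟩
      exact Submodule.mem_map_of_mem ⟨g, rfl⟩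
    · rw [hF1eq, Submodule.map_sup]
      apply sup_le
      · exact le_of_eq e1.symm
      · refine le_trans (Submodule.map_mono hA) (le_trans (le_of_eq hπD) bot_le)
  obtain ⟨b1, hb1T, hb1span, hb1ind⟩ :=
    exists_linearIndependent k (⇑D.mkQ '' (⇑eNM' '' RNM))
  obtain ⟨S1, hS1T, hS1img, hS1inj⟩ := choose_preimages D.mkQ _ b1 hb1T
  set RNM' : Set (RSp k s t X Y) := {x | x ∈ RNM ∧ eNM' x ∈ S1} with hRNM'
  have hRNM'sub : RNM' ⊆ RNM := fun x hx => hx.1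
  have hS1eq : ⇑eNM' '' RNM' = S1 := by
    apply Set.eq_of_subset_of_subset
    · rintro _ ⟨x, hx, rfl⟩; exact hx.2
    · intro z hz
      obtain ⟨x, hx, rfl⟩ := hS1T hz
      exact ⟨x, ⟨hx, hz⟩, rfl⟩
  have hS1F1 : S1 ⊆ ↑F1 := by
    rw [← hS1eq]; rintro _ ⟨x, hx, rfl⟩; exact ⟨x, rfl⟩
  have i1 : LinearIndependent k (fun x : S1 => Submodule.Quotient.mk (p := D) x.1) := by
    have := (linearIndepOn_iff_image hS1inj).mpr (hS1img ▸ hb1ind)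
    exact this
  have sp1 : F1 ≤ Submodule.span k S1 ⊔ D := by
    have hmapeq : Submodule.map D.mkQ (Submodule.span k S1) = Submodule.map D.mkQ F1 := by
      rw [← Submodule.span_image, hS1img, hb1span, hT1span]
    have h2 := Submodule.le_comap_map D.mkQ F1
    rw [← hmapeq, Submodule.comap_map_eq, Submodule.ker_mkQ] at h2
    exact h2
  ------------------------------------------------------------------
  -- Level 2 : the (M,M) and (N,N) blocks, w.r.t. F1 ⊔ D
  ------------------------------------------------------------------
  have hker2 : Submodule.map (F1 ⊔ D).mkQ (F1 ⊔ D) = ⊥ := map_mkQ_eq_bot le_rfl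
  have hrMMeq : LinearMap.range eMM' = Submodule.map eMM' (Submodule.span k RM)
      ⊔ Submodule.map eMM' (LinearMap.range dMM) := by
    rw [← Submodule.map_sup, hRMsp, Submodule.map_top]
  have hrNNeq : LinearMap.range eNN' = Submodule.map eNN' (Submodule.span k RN)
      ⊔ Submodule.map eNN' (LinearMap.range dNN) := by
    rw [← Submodule.map_sup, hRNsp, Submodule.map_top]
  have hT2span : Submodule.span k (⇑(F1 ⊔ D).mkQ '' (⇑eMM' '' RM ∪ ⇑eNN' '' RN))
      = Submodule.map (F1 ⊔ D).mkQ F2 := by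
    apply le_antisymm
    · rw [Submodule.span_le]
      rintro _ ⟨x, hx, rfl⟩
      rcases hx with ⟨g, hg, rfl⟩ | ⟨g, hg, rfl⟩
      · exact Submodule.mem_map_of_mem (hMMleF2 ⟨g, rfl⟩)
      · exact Submodule.mem_map_of_mem (hNNleF2 ⟨g, rfl⟩)
    · rw [hF2, Submodule.map_sup, Submodule.map_sup]
      refine sup_le (sup_le ?_ ?_) ?_
      · refine le_trans (Submodule.map_mono (le_sup_left (b := D))) ?_
        rw [hker2]; exact bot_le
      · rw [hrMMeq, Submodule.map_sup]
        apply sup_le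
        · have e2 : Submodule.map (F1 ⊔ D).mkQ (Submodule.map eMM' (Submodule.span k RM))
              = Submodule.span k (⇑(F1 ⊔ D).mkQ '' (⇑eMM' '' RM)) := by
            rw [Submodule.span_image, Submodule.span_image]
          rw [e2]
          exact Submodule.span_mono (Set.image_mono Set.subset_union_left)
        · refine le_trans (Submodule.map_mono hB) ?_
          rw [hker2]; exact bot_le
      · rw [hrNNeq, Submodule.map_sup]
        apply sup_le
        · have e2 : Submodule.map (F1 ⊔ D).mkQ (Submodule.map eNN' (Submodule.span k RN))
              = Submodule.span k (⇑(F1 ⊔ D).mkQ '' (⇑eNN' '' RN)) := by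
            rw [Submodule.span_image, Submodule.span_image]
          rw [e2]
          exact Submodule.span_mono (Set.image_mono Set.subset_union_right)
        · refine le_trans (Submodule.map_mono hC) ?_
          rw [hker2]; exact bot_le
  obtain ⟨b2, hb2T, hb2span, hb2ind⟩ :=
    exists_linearIndependent k (⇑(F1 ⊔ D).mkQ '' (⇑eMM' '' RM ∪ ⇑eNN' '' RN))
  obtain ⟨S2, hS2T, hS2img, hS2inj⟩ := choose_preimages (F1 ⊔ D).mkQ _ b2 hb2T
  set RM' : Set (RSp k s t Y Y) := {x | x ∈ RM ∧ eMM' x ∈ S2} with hRM'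
  set RN' : Set (RSp k s t X X) := {x | x ∈ RN ∧ eNN' x ∈ S2} with hRN'
  have hRM'sub : RM' ⊆ RM := fun x hx => hx.1
  have hRN'sub : RN' ⊆ RN := fun x hx => hx.1
  have hS2eq : ⇑eMM' '' RM' ∪ ⇑eNN' '' RN' = S2 := by
    apply Set.eq_of_subset_of_subset
    · rintro _ (⟨x, hx, rfl⟩ | ⟨x, hx, rfl⟩)
      · exact hx.2
      · exact hx.2
    · intro z hz
      rcases hS2T hz with ⟨x, hx, rfl⟩ | ⟨x, hx, rfl⟩
      · exact Or.inl ⟨x, ⟨hx, hz⟩, rfl⟩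
      · exact Or.inr ⟨x, ⟨hx, hz⟩, rfl⟩
  have hS2F2 : S2 ⊆ ↑F2 := by
    rw [← hS2eq]
    rintro _ (⟨x, hx, rfl⟩ | ⟨x, hx, rfl⟩)
    · exact hMMleF2 ⟨x, rfl⟩
    · exact hNNleF2 ⟨x, rfl⟩
  have i2 : LinearIndependent k
      (fun x : S2 => Submodule.Quotient.mk (p := F1 ⊔ D) x.1) := by
    have := (linearIndepOn_iff_image hS2inj).mpr (hS2img ▸ hb2ind)
    exact this
  have sp2 : F2 ≤ Submodule.span k S2 ⊔ F1 ⊔ D := by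
    have hmapeq : Submodule.map (F1 ⊔ D).mkQ (Submodule.span k S2)
        = Submodule.map (F1 ⊔ D).mkQ F2 := by
      rw [← Submodule.span_image, hS2img, hb2span, hT2span]
    have h2 := Submodule.le_comap_map (F1 ⊔ D).mkQ F2
    rw [← hmapeq, Submodule.comap_map_eq, Submodule.ker_mkQ] at h2
    rw [sup_assoc]
    exact h2
  ------------------------------------------------------------------
  -- Level 3 : the (M,N) block, w.r.t. F2 ⊔ D
  ------------------------------------------------------------------
  set S3 : Set (RSp k s t (fun q => Y q × X q) (fun q => Y q × X q)) := ⇑eMN' '' RMN with hS3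
  have hker3 : F2 ⊔ D ≤ LinearMap.ker ((LinearMap.range dMN).mkQ.comp (pMN s t)) := by
    refine sup_le (sup_le (sup_le ?_ ?_) ?_) ?_
    · rintro _ ⟨g, rfl⟩
      rw [LinearMap.mem_ker, LinearMap.comp_apply, heNM', pMN_eNM, map_zero]
    · rintro _ ⟨g, rfl⟩
      rw [LinearMap.mem_ker, LinearMap.comp_apply, heMM', pMN_eMM, map_zero]
    · rintro _ ⟨g, rfl⟩
      rw [LinearMap.mem_ker, LinearMap.comp_apply, heNN', pMN_eNN, map_zero]
    · rintro _ ⟨f, rfl⟩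
      rw [LinearMap.mem_ker, LinearMap.comp_apply, K5]
      exact (Submodule.Quotient.mk_eq_zero _).mpr ⟨_, rfl⟩
  set φ := Submodule.liftQ (F2 ⊔ D) ((LinearMap.range dMN).mkQ.comp (pMN s t)) hker3 with hφ
  have hφap : ∀ g : RSp k s t Y X,
      φ (Submodule.Quotient.mk (p := F2 ⊔ D) (eMN' g))
        = Submodule.Quotient.mk (p := LinearMap.range dMN) g := by
    intro g
    rw [hφ, Submodule.liftQ_apply, LinearMap.comp_apply, heMN', pMN_eMN]
    rfl
  have hinjMN : Function.Injective ⇑eMN' := by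
    intro a b h
    have h2 : pMN s t (eMN' a) = pMN s t (eMN' b) := by rw [h]
    rwa [heMN', pMN_eMN, pMN_eMN] at h2
  have i3 : LinearIndependent k
      (fun x : S3 => Submodule.Quotient.mk (p := F2 ⊔ D) x.1) := by
    have i3pre : LinearIndependent k
        (fun x : RMN => Submodule.Quotient.mk (p := F2 ⊔ D) (eMN' x.1)) := by
      apply LinearIndependent.of_comp φ
      have hfam : (⇑φ ∘ fun x : RMN => Submodule.Quotient.mk (p := F2 ⊔ D) (eMN' x.1))
          = fun x : RMN => Submodule.Quotient.mk (p := LinearMap.range dMN) x.1 := by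
        funext x; exact hφap x.1
      rw [hfam]
      exact hRMN.1
    refine (linearIndependent_equiv' (Equiv.Set.image ⇑eMN' RMN hinjMN)
      (f := fun x : S3 => Submodule.Quotient.mk (p := F2 ⊔ D) x.1)
      (g := fun x : RMN => Submodule.Quotient.mk (p := F2 ⊔ D) (eMN' x.1)) ?_).mp i3pre
    funext x
    rfl
  have htople : (⊤ : Submodule k (RSp k s t (fun q => Y q × X q) (fun q => Y q × X q)))
      ≤ F2 ⊔ LinearMap.range eMN' := by
    intro v _
    rw [decompB s t v]
    refine Submodule.add_mem _ (Submodule.add_mem _ (Submodule.add_mem _ ?_ ?_) ?_) ?_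
    · exact Submodule.mem_sup_left (hMMleF2 ⟨_, rfl⟩)
    · exact Submodule.mem_sup_left (hNNleF2 ⟨_, rfl⟩)
    · exact Submodule.mem_sup_left (hF1leF2 ⟨_, rfl⟩)
    · exact Submodule.mem_sup_right ⟨_, rfl⟩
  have hrangeMN : LinearMap.range eMN' ≤ Submodule.span k S3 ⊔ (F2 ⊔ D) := by
    have hreq : LinearMap.range eMN' = Submodule.map eMN' (Submodule.span k RMN)
        ⊔ Submodule.map eMN' (LinearMap.range dMN) := by
      rw [← Submodule.map_sup, hRMNsp, Submodule.map_top]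
    rw [hreq]
    apply sup_le
    · have : Submodule.map eMN' (Submodule.span k RMN) = Submodule.span k S3 :=
        (Submodule.span_image _).symm
      exact le_trans (le_of_eq this) le_sup_left
    · exact le_trans hDD le_sup_right
  have sp3 : (⊤ : Submodule k (RSp k s t (fun q => Y q × X q) (fun q => Y q × X q)))
      ≤ Submodule.span k S3 ⊔ F2 ⊔ D := by
    rw [sup_assoc]
    refine le_trans htople (sup_le ?_ hrangeMN)
    exact le_trans le_sup_left le_sup_right
  ------------------------------------------------------------------
  -- Assembly
  ------------------------------------------------------------------
  obtain ⟨Ind, Span⟩ := abstract_filtration D F1 F2 hF1leF2 S1 S2 S3 hS1F1 hS2F2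
    i1 i2 i3 sp1 sp2 sp3
  have hset : S1 ∪ S2 ∪ S3
      = (embMM s t '' RM' ∪ embNN s t '' RN' ∪ embNM s t '' RNM') ∪ embMN s t '' RMN := by
    have h1 : embMM s t '' RM' ∪ embNN s t '' RN' = S2 := hS2eq
    have h2 : embNM s t '' RNM' = S1 := hS1eq
    have h3 : embMN s t '' RMN = S3 := rfl
    rw [h1, h2, h3, Set.union_comm S1 S2]
  rw [hset] at Ind Span
  exact ⟨RM', hRM'sub, RN', hRN'sub, RNM', hRNM'sub, Ind, Span⟩
end
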